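/- arXiv:1403.1502 — 2 statements merged into one kernel-verified Lean document; each statement's English description precedes it below -/
import Mathlib

section
/- Let 𝐰 = (s₁,s₂,…) be an infinite reduced word of a Lorentzian Coxeter system (W,S)_B and let γ̄(𝐰) denote the unique accumulation point of ℙ(inv(𝐰)). Then γ̄(𝐰) arises as a limit direction through the sequence of prefixes: there exists a base point x̄₀ ∈ ℙV such that the sequence (w_k·x̄₀)_{k∈ℕ}, where w_k = s₁s₂⋯s_k, is injective and converges to γ̄(𝐰). -/
open Projectivization Filter Topology TensorProduct
open scoped LinearAlgebra.Projectivization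

noncomputable section

/-- The representation space `V`: functions `S → ℝ`, with the simple roots as standard basis. -/
abbrev Vec (S : Type) : Type := S → ℝ

/-- The simple root associated to a generator `s ∈ S`. -/
def simpleRoot {S : Type} [DecidableEq S] (s : S) : Vec S := Pi.single s 1

/-- The symmetric bilinear form on `V` determined by the matrix `k`. -/
def Bform {S : Type} [Fintype S] (k : S → S → ℝ) (x y : Vec S) : ℝ :=
  ∑ s : S, ∑ t : S, x s * k s t * y t

instance {S : Type} : TopologicalSpace (ℙ ℝ (Vec S)) :=
  inferInstanceAs (TopologicalSpace (Quotient (projectivizationSetoid ℝ (Vec S))))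

/-- `p` is an accumulation point of `Y`: every neighbourhood of `p` contains a point of `Y`
different from `p`. -/
def IsAccumPt {X : Type*} [TopologicalSpace X] (p : X) (Y : Set X) : Prop :=
  ∀ U ∈ nhds p, ∃ y ∈ Y, y ∈ U ∧ y ≠ p

/-! ### Topology of the projectivization -/

section Topo

variable {S : Type}

/-- The quotient map from nonzero vectors. -/
abbrev pmk (v : {v : Vec S // v ≠ 0}) : ℙ ℝ (Vec S) := Projectivization.mk ℝ v.1 v.2

lemma quotientMap_pmk : Topology.IsQuotientMap (pmk (S := S)) :=
  isQuotientMap_quotient_mk'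

lemma continuous_pmk : Continuous (pmk (S := S)) := quotientMap_pmk.continuous

lemma isOpenMap_pmk : IsOpenMap (pmk (S := S)) := by
  intro O hO
  obtain ⟨O₁, hO₁, rfl⟩ := isOpen_induced_iff.mp hO
  rw [← quotientMap_pmk.isOpen_preimage]
  have : pmk (S := S) ⁻¹' (pmk '' ((Subtype.val) ⁻¹' O₁)) =
      ⋃ (a : ℝˣ), (fun v : {v : Vec S // v ≠ 0} => (a : ℝ) • v.1) ⁻¹' O₁ := by
    ext v
    simp only [Set.mem_preimage, Set.mem_image, Set.mem_iUnion]
    constructor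
    · rintro ⟨w, hw, hww⟩
      obtain ⟨a, ha⟩ := (Projectivization.mk_eq_mk_iff ℝ _ _ _ _).mp hww
      rw [Units.smul_def] at ha
      exact ⟨a, by rw [ha]; exact hw⟩
    · rintro ⟨a, ha⟩
      refine ⟨⟨(a : ℝ) • v.1, smul_ne_zero a.ne_zero v.2⟩, ha, ?_⟩
      exact (Projectivization.mk_eq_mk_iff ℝ _ _ _ _).mpr ⟨a, by rw [Units.smul_def]⟩
  rw [this]
  exact isOpen_iUnion fun a => (hO₁.preimage ((continuous_const_smul _).comp continuous_subtype_val))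

lemma pmk_eq_iff_minors (u v : {v : Vec S // v ≠ 0}) :
    pmk u = pmk v ↔ ∀ i j : S, u.1 i * v.1 j = u.1 j * v.1 i := by
  rw [Projectivization.mk_eq_mk_iff]
  constructor
  · rintro ⟨a, ha⟩ i j
    have hi : u.1 i = a * v.1 i := by rw [← ha]; rfl
    have hj : u.1 j = a * v.1 j := by rw [← ha]; rfl
    rw [hi, hj]; ring
  · intro h
    obtain ⟨i₀, hi₀⟩ : ∃ i₀, v.1 i₀ ≠ 0 := by
      by_contra hc
      push_neg at hc
      exact v.2 (funext hc)
    have hu0 : u.1 i₀ ≠ 0 := by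
      by_contra hc
      obtain ⟨j, hj⟩ : ∃ j, u.1 j ≠ 0 := by
        by_contra hc2; push_neg at hc2; exact u.2 (funext hc2)
      have := h i₀ j
      rw [hc, zero_mul] at this
      rcases mul_eq_zero.mp this.symm with h1 | h1
      · exact hj h1
      · exact hi₀ h1
    refine ⟨Units.mk0 (u.1 i₀ / v.1 i₀) (div_ne_zero hu0 hi₀), ?_⟩
    ext j
    have hh := h i₀ j
    show (Units.mk0 (u.1 i₀ / v.1 i₀) _ : ℝ) • v.1 j = u.1 j
    show (u.1 i₀ / v.1 i₀) * v.1 j = u.1 j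
    rw [div_mul_eq_mul_div, hh, mul_div_assoc, div_self hi₀, mul_one]

instance : T2Space (ℙ ℝ (Vec S)) := by
  constructor
  intro p q hpq
  set x : {v : Vec S // v ≠ 0} := ⟨p.rep, p.rep_nonzero⟩ with hx
  set y : {v : Vec S // v ≠ 0} := ⟨q.rep, q.rep_nonzero⟩ with hy
  have hpmx : pmk x = p := p.mk_rep
  have hpmy : pmk y = q := q.mk_rep
  have hxy : (x.1, y.1) ∈ {uv : (Vec S) × (Vec S) | ∀ i j : S, uv.1 i * uv.2 j = uv.1 j * uv.2 i}ᶜ := by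
    intro hc
    exact hpq (by rw [← hpmx, ← hpmy]; exact (pmk_eq_iff_minors x y).mpr hc)
  have hZc : IsOpen {uv : (Vec S) × (Vec S) | ∀ i j : S, uv.1 i * uv.2 j = uv.1 j * uv.2 i}ᶜ := by
    rw [isOpen_compl_iff]
    have : {uv : (Vec S) × (Vec S) | ∀ i j : S, uv.1 i * uv.2 j = uv.1 j * uv.2 i} =
        ⋂ (i : S) (j : S), {uv : (Vec S) × (Vec S) | uv.1 i * uv.2 j = uv.1 j * uv.2 i} := by
      ext uv; simp
    rw [this]
    refine isClosed_iInter fun i => isClosed_iInter fun j => isClosed_eq ?_ ?_ <;> fun_prop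
  obtain ⟨U, V, hU, hV, hxU, hyV, hUV⟩ := isOpen_prod_iff.mp hZc x.1 y.1 hxy
  have hUo : IsOpen ((Subtype.val) ⁻¹' U : Set {v : Vec S // v ≠ 0}) := hU.preimage continuous_subtype_val
  have hVo : IsOpen ((Subtype.val) ⁻¹' V : Set {v : Vec S // v ≠ 0}) := hV.preimage continuous_subtype_val
  refine ⟨pmk '' ((Subtype.val) ⁻¹' U), pmk '' ((Subtype.val) ⁻¹' V),
    isOpenMap_pmk _ hUo, isOpenMap_pmk _ hVo, ⟨x, hxU, hpmx⟩, ⟨y, hyV, hpmy⟩, ?_⟩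
  rw [Set.disjoint_iff]
  rintro r ⟨⟨w, hw, hwr⟩, ⟨w', hw', hw'r⟩⟩
  have : pmk w = pmk w' := by rw [hwr, hw'r]
  have hmem : (w.1, w'.1) ∈ U ×ˢ V := ⟨hw, hw'⟩
  exact (hUV hmem) ((pmk_eq_iff_minors w w').mp this)

end Topo

/-! ### Bilinear form lemmas -/

section BformLemmas

set_option linter.unusedSectionVars false

variable {S : Type} [Fintype S] [DecidableEq S] (k : S → S → ℝ)

lemma Bform_zero_left (y : Vec S) : Bform k 0 y = 0 := by simp [Bform]

lemma Bform_zero_right (x : Vec S) : Bform k x 0 = 0 := by simp [Bform]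

lemma Bform_add_left (x y z : Vec S) : Bform k (x + y) z = Bform k x z + Bform k y z := by
  unfold Bform
  rw [← Finset.sum_add_distrib]
  refine Finset.sum_congr rfl fun s _ => ?_
  rw [← Finset.sum_add_distrib]
  refine Finset.sum_congr rfl fun t _ => ?_
  simp only [Pi.add_apply]; ring

lemma Bform_add_right (x y z : Vec S) : Bform k x (y + z) = Bform k x y + Bform k x z := by
  unfold Bform
  rw [← Finset.sum_add_distrib]
  refine Finset.sum_congr rfl fun s _ => ?_
  rw [← Finset.sum_add_distrib]
  refine Finset.sum_congr rfl fun t _ => ?_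
  simp only [Pi.add_apply]; ring

lemma Bform_smul_left (c : ℝ) (x y : Vec S) : Bform k (c • x) y = c * Bform k x y := by
  unfold Bform
  rw [Finset.mul_sum]
  refine Finset.sum_congr rfl fun s _ => ?_
  rw [Finset.mul_sum]
  refine Finset.sum_congr rfl fun t _ => ?_
  simp only [Pi.smul_apply, smul_eq_mul]; ring

lemma Bform_smul_right (c : ℝ) (x y : Vec S) : Bform k x (c • y) = c * Bform k x y := by
  unfold Bform
  rw [Finset.mul_sum]
  refine Finset.sum_congr rfl fun s _ => ?_
  rw [Finset.mul_sum]
  refine Finset.sum_congr rfl fun t _ => ?_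
  simp only [Pi.smul_apply, smul_eq_mul]; ring

lemma Bform_neg_left (x y : Vec S) : Bform k (-x) y = -Bform k x y := by
  have := Bform_smul_left k (-1) x y
  simpa using this

lemma Bform_sub_left (x y z : Vec S) : Bform k (x - y) z = Bform k x z - Bform k y z := by
  rw [sub_eq_add_neg, Bform_add_left, Bform_neg_left, sub_eq_add_neg]

lemma Bform_sub_right (x y z : Vec S) : Bform k x (y - z) = Bform k x y - Bform k x z := by
  have := Bform_smul_right k (-1) x z
  rw [sub_eq_add_neg, Bform_add_right]
  simp at this
  rw [this]; ring

lemma Bform_sum_left {ι : Type*} (F : Finset ι) (f : ι → Vec S) (y : Vec S) :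
    Bform k (∑ i ∈ F, f i) y = ∑ i ∈ F, Bform k (f i) y := by
  classical
  induction F using Finset.induction with
  | empty => simp [Bform_zero_left]
  | insert _ _ h ih => rw [Finset.sum_insert h, Finset.sum_insert h, Bform_add_left, ih]

lemma Bform_apply_single (x : Vec S) (t : S) :
    Bform k x (Pi.single t 1) = ∑ s, x s * k s t := by
  unfold Bform
  refine Finset.sum_congr rfl fun s _ => ?_
  simp [Pi.single_apply, mul_ite, Finset.sum_ite_eq', eq_comm]

lemma Bform_single_single (s t : S) : Bform k (Pi.single s 1) (Pi.single t 1) = k s t := by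
  rw [Bform_apply_single]
  simp [Pi.single_apply, ite_mul, Finset.sum_ite_eq', eq_comm]

lemma Bform_eq_sum_right (x y : Vec S) :
    Bform k x y = ∑ t, Bform k x (Pi.single t 1) * y t := by
  simp_rw [Bform_apply_single]
  unfold Bform
  rw [Finset.sum_comm]
  exact Finset.sum_congr rfl fun t _ => by rw [Finset.sum_mul]

lemma continuous_Bform_pair : Continuous (fun p : Vec S × Vec S => Bform k p.1 p.2) := by
  unfold Bform
  refine continuous_finset_sum _ fun s _ => continuous_finset_sum _ fun t _ => ?_
  exact (((continuous_apply s).comp continuous_fst).mul continuous_const).mul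
    ((continuous_apply t).comp continuous_snd)

lemma continuous_Bform_left (y : Vec S) : Continuous (fun x : Vec S => Bform k x y) :=
  (continuous_Bform_pair k).comp (continuous_id.prodMk continuous_const)

lemma continuous_Bform_right (x : Vec S) : Continuous (fun y : Vec S => Bform k x y) :=
  (continuous_Bform_pair k).comp (continuous_const.prodMk continuous_id)

lemma continuous_Bform_diag : Continuous (fun x : Vec S => Bform k x x) :=
  (continuous_Bform_pair k).comp (continuous_id.prodMk continuous_id)

lemma abs_Bform_le (x y : Vec S) :
    |Bform k x y| ≤ (∑ s : S, ∑ t : S, |k s t|) * (‖x‖ * ‖y‖) := by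
  unfold Bform
  calc |∑ s, ∑ t, x s * k s t * y t| ≤ ∑ s, |∑ t, x s * k s t * y t| :=
        Finset.abs_sum_le_sum_abs _ _
    _ ≤ ∑ s, ∑ t, |x s * k s t * y t| :=
        Finset.sum_le_sum fun s _ => Finset.abs_sum_le_sum_abs _ _
    _ ≤ ∑ s : S, ∑ t : S, |k s t| * (‖x‖ * ‖y‖) := by
        refine Finset.sum_le_sum fun s _ => Finset.sum_le_sum fun t _ => ?_
        rw [abs_mul, abs_mul]
        have hx : |x s| ≤ ‖x‖ := by simpa using norm_le_pi_norm x s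
        have hy : |y t| ≤ ‖y‖ := by simpa using norm_le_pi_norm y t
        calc |x s| * |k s t| * |y t| ≤ ‖x‖ * |k s t| * ‖y‖ := by
              refine mul_le_mul (mul_le_mul hx le_rfl (abs_nonneg _) (norm_nonneg _)) hy
                (abs_nonneg _) (by positivity)
          _ = |k s t| * (‖x‖ * ‖y‖) := by ring
    _ = (∑ s : S, ∑ t : S, |k s t|) * (‖x‖ * ‖y‖) := by
        rw [Finset.sum_mul]
        exact Finset.sum_congr rfl fun s _ => by rw [Finset.sum_mul]

/-- Existence of a base point `x₀` with `B(x₀, αₜ) = -1` for all `t`,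
given nondegeneracy in the form of a diagonalizing basis. -/
lemma exists_base_point
    (hb : ∃ b : Module.Basis (Fin (Fintype.card S)) ℝ (Vec S), ∀ i j,
      Bform k (b i) (b j) =
        if i = j then (if (i : ℕ) + 1 = Fintype.card S then -1 else 1) else 0) :
    ∃ x₀ : Vec S, ∀ t, Bform k x₀ (Pi.single t 1) = -1 := by
  obtain ⟨b, hgram⟩ := hb
  let φ : Vec S →ₗ[ℝ] Vec S :=
    { toFun := fun x => fun t => Bform k x (Pi.single t 1)
      map_add' := fun x y => by funext t; exact Bform_add_left k x y _
      map_smul' := fun c x => by funext t; simpa using Bform_smul_left k c x (Pi.single t 1) }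
  have hinj : Function.Injective φ := by
    rw [injective_iff_map_eq_zero]
    intro x hx
    have hall : ∀ y, Bform k x y = 0 := by
      intro y
      rw [Bform_eq_sum_right]
      refine Finset.sum_eq_zero fun t _ => ?_
      have : Bform k x (Pi.single t 1) = 0 := congrFun hx t
      rw [this, zero_mul]
    have hrepr : ∀ j, b.repr x j = 0 := by
      intro j
      have hxx : x = ∑ i, b.repr x i • b i := (b.sum_repr x).symm
      have h0 : Bform k x (b j) = 0 := hall _
      rw [hxx, Bform_sum_left] at h0
      have : ∀ i, Bform k (b.repr x i • b i) (b j) = b.repr x i * Bform k (b i) (b j) :=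
        fun i => Bform_smul_left k _ _ _
      simp_rw [this, hgram, mul_ite, mul_zero] at h0
      rw [Finset.sum_ite_eq' Finset.univ j] at h0
      simp only [Finset.mem_univ, if_true] at h0
      rcases (em ((j : ℕ) + 1 = Fintype.card S)) with h | h <;> simp [h] at h0 <;> linarith
    have : b.repr x = 0 := by ext j; exact hrepr j
    have hx0 : x = ∑ i, b.repr x i • b i := (b.sum_repr x).symm
    rw [this] at hx0
    simpa using hx0
  have hsurj : Function.Surjective φ := (LinearMap.injective_iff_surjective).mp hinj
  obtain ⟨x₀, hx₀⟩ := hsurj (fun _ => -1)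
  exact ⟨x₀, fun t => congrFun hx₀ t⟩

end BformLemmas

/-! ### Cluster point toolkit -/

section Cluster

open Filter Topology

variable {X : Type*} [TopologicalSpace X] {Y : Type*} [TopologicalSpace Y]

lemma MapClusterPt.comp_cont {F : Filter ℕ} {u : ℕ → X} {c : X} (h : MapClusterPt c F u)
    {f : X → Y} (hf : Continuous f) : MapClusterPt (f c) F (fun n => f (u n)) := by
  have hne : (𝓝 c ⊓ Filter.map u F).NeBot := h
  have hle : Filter.map f (𝓝 c ⊓ Filter.map u F) ≤ 𝓝 (f c) ⊓ Filter.map (fun n => f (u n)) F := by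
    refine le_trans Filter.map_inf_le (inf_le_inf ?_ ?_)
    · exact hf.continuousAt.tendsto
    · rw [Filter.map_map]; exact le_refl _
  have hm : (Filter.map f (𝓝 c ⊓ Filter.map u F)).NeBot := hne.map f
  exact neBot_of_le hle

lemma MapClusterPt.mem_of_eventually {F : Filter ℕ} {u : ℕ → X} {c : X} (h : MapClusterPt c F u)
    {s : Set X} (hs : IsClosed s) (hev : ∀ᶠ n in F, u n ∈ s) : c ∈ s := by
  have hne : (𝓝 c ⊓ Filter.map u F).NeBot := h
  have hle : 𝓝 c ⊓ Filter.map u F ≤ 𝓝 c ⊓ Filter.principal s := by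
    refine inf_le_inf le_rfl (le_principal_iff.mpr ?_)
    exact mem_map.mpr hev
  have : ClusterPt c (Filter.principal s) := neBot_of_le hle
  rw [← hs.closure_eq]
  exact mem_closure_iff_clusterPt.mpr this

lemma MapClusterPt.eq_of_tendsto [T2Space X] {F : Filter ℕ} [F.NeBot] {u : ℕ → X} {c L : X}
    (h : MapClusterPt c F u) (h' : Tendsto u F (𝓝 L)) : c = L := by
  have hne : (𝓝 c ⊓ Filter.map u F).NeBot := h
  have hle : 𝓝 c ⊓ Filter.map u F ≤ 𝓝 c ⊓ 𝓝 L := inf_le_inf le_rfl h'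
  exact t2_iff_nhds.mp ‹_› (neBot_of_le hle)

lemma exists_mapClusterPt_of_frequently_mem {u : ℕ → X} {K : Set X} (hK : IsCompact K)
    (hf : ∃ᶠ n in atTop, u n ∈ K) : ∃ c ∈ K, MapClusterPt c atTop u := by
  have hne : (atTop ⊓ Filter.principal {n | u n ∈ K}).NeBot := frequently_iff_neBot.mp hf
  have hle : Filter.map u (atTop ⊓ Filter.principal {n | u n ∈ K}) ≤ Filter.principal K := by
    rw [le_principal_iff, mem_map]
    exact mem_inf_of_right (by simp [Filter.mem_principal]; rfl)
  obtain ⟨c, hcK, hc⟩ := hK.exists_clusterPt hle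
  refine ⟨c, hcK, hc.mono (Filter.map_mono inf_le_left)⟩

lemma exists_mapClusterPt_of_mem {u : ℕ → X} {K : Set X} (hK : IsCompact K)
    (hall : ∀ n, u n ∈ K) : ∃ c ∈ K, MapClusterPt c atTop u :=
  exists_mapClusterPt_of_frequently_mem hK (Eventually.frequently (Eventually.of_forall hall))

lemma tendsto_of_unique_mapClusterPt {u : ℕ → X} {K : Set X} (hK : IsCompact K)
    (hall : ∀ n, u n ∈ K) {L : X} (hL : ∀ c, MapClusterPt c atTop u → c = L) :
    Tendsto u atTop (𝓝 L) := by
  by_contra hc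
  obtain ⟨s, hs, hfreq⟩ := not_tendsto_iff_exists_frequently_notMem.mp hc
  have hLint : L ∈ interior s := mem_interior_iff_mem_nhds.mpr hs
  have hfreq' : ∃ᶠ n in atTop, u n ∈ K \ interior s := by
    refine hfreq.mono fun n hn => ⟨hall n, fun hmem => hn (interior_subset hmem)⟩
  obtain ⟨c, hcK, hc⟩ := exists_mapClusterPt_of_frequently_mem (hK.diff isOpen_interior) hfreq'
  rw [hL c hc] at hcK
  exact hcK.2 hLint

lemma MapClusterPt.congr_dist {α : Type*} [PseudoMetricSpace α] {u w : ℕ → α} {c : α}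
    (h : MapClusterPt c atTop u)
    (hd : Tendsto (fun n => dist (u n) (w n)) atTop (𝓝 0)) : MapClusterPt c atTop w := by
  rw [mapClusterPt_iff_frequently] at h ⊢
  intro s hs
  obtain ⟨ε, hε, hball⟩ := Metric.mem_nhds_iff.mp hs
  have h1 := h (Metric.ball c (ε / 2)) (Metric.ball_mem_nhds _ (by linarith))
  have h2 : ∀ᶠ n in atTop, dist (u n) (w n) < ε / 2 := by
    have := hd.eventually (gt_mem_nhds (show (0:ℝ) < ε / 2 by linarith))
    exact this.mono fun n hn => lt_of_le_of_lt (le_abs_self _) (by simpa [abs_of_nonneg dist_nonneg] using hn)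
  refine (h1.and_eventually h2).mono fun n ⟨h1n, h2n⟩ => ?_
  apply hball
  have : dist (w n) c ≤ dist (w n) (u n) + dist (u n) c := dist_triangle _ _ _
  rw [Metric.mem_ball] at h1n ⊢
  rw [dist_comm (w n) (u n)] at this
  linarith

end Cluster

/-! ### Chebyshev-type sequences -/

noncomputable def chebU (c : ℝ) : ℕ → ℝ
  | 0 => 0
  | 1 => 1
  | n + 2 => 2 * c * chebU c (n + 1) - chebU c n

lemma chebU_zero (c : ℝ) : chebU c 0 = 0 := rfl
lemma chebU_one (c : ℝ) : chebU c 1 = 1 := rfl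
lemma chebU_two (c : ℝ) (n : ℕ) : chebU c (n + 2) = 2 * c * chebU c (n + 1) - chebU c n := rfl

lemma chebU_mul_sin (θ : ℝ) (n : ℕ) :
    chebU (Real.cos θ) n * Real.sin θ = Real.sin (n * θ) := by
  induction n using Nat.twoStepInduction with
  | zero => simp [chebU_zero]
  | one => simp [chebU_one]
  | more n ih1 ih2 =>
    have key : Real.sin (((n : ℝ) + 2) * θ) =
        2 * Real.cos θ * Real.sin (((n : ℝ) + 1) * θ) - Real.sin ((n : ℝ) * θ) := by
      have hadd := Real.sin_add (((n : ℝ) + 1) * θ) θ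
      have hsub := Real.sin_sub (((n : ℝ) + 1) * θ) θ
      have e1 : ((n : ℝ) + 1) * θ + θ = ((n : ℝ) + 2) * θ := by ring
      have e2 : ((n : ℝ) + 1) * θ - θ = (n : ℝ) * θ := by ring
      rw [e1] at hadd; rw [e2] at hsub; linarith
    push_cast
    push_cast at ih1 ih2
    rw [chebU_two, key, ← ih1, ← ih2]
    ring

lemma chebU_nonneg_fin {m : ℕ} (hm : 2 ≤ m) {n : ℕ} (hn : n ≤ m) :
    0 ≤ chebU (Real.cos (Real.pi / m)) n := by
  have hm0 : (0 : ℝ) < m := by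
    have : (2 : ℝ) ≤ m := by exact_mod_cast hm
    linarith
  set θ := Real.pi / m with hθ
  have hθpos : 0 < θ := div_pos Real.pi_pos hm0
  have h2m : (2 : ℝ) ≤ m := by exact_mod_cast hm
  have hθlt : θ < Real.pi := by
    rw [hθ, div_lt_iff₀ hm0]
    nlinarith [Real.pi_pos]
  have hsin : 0 < Real.sin θ := Real.sin_pos_of_pos_of_lt_pi hθpos hθlt
  have hmθ : (m : ℝ) * θ = Real.pi := by
    rw [hθ]
    field_simp
  have hsn : 0 ≤ Real.sin (n * θ) := by
    apply Real.sin_nonneg_of_nonneg_of_le_pi (by positivity)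
    rw [← hmθ]
    exact mul_le_mul_of_nonneg_right (by exact_mod_cast hn) hθpos.le
  have hid := chebU_mul_sin θ n
  by_contra h
  push_neg at h
  nlinarith

lemma chebU_nonneg_inf {c : ℝ} (hc : 1 ≤ c) : ∀ n, 0 ≤ chebU c n ∧ chebU c n ≤ chebU c (n + 1) := by
  intro n
  induction n with
  | zero => simp [chebU_zero, chebU_one]
  | succ n ih =>
    obtain ⟨h0, hmono⟩ := ih
    have h1 : 0 ≤ chebU c (n + 1) := le_trans h0 hmono
    refine ⟨h1, ?_⟩
    rw [chebU_two]
    nlinarith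

/-- A Lorentzian Coxeter system `(W,S)_B`: a Coxeter system `(W,S)` together with a symmetric
matrix `k` (with entries `-cos (π / m s t)` for `m s t` finite and arbitrary entries `≤ -1`
for `m s t = ∞`, encoded by `M s t = 0`), whose bilinear form has signature `(n-1, 1)`,
and the faithful geometric representation `ρ` of `W` on `V`, sending each simple reflection
to the `𝓑`-reflection in the corresponding simple root, and preserving `𝓑`. -/
structure LorentzianCoxeterSystem (S W : Type) [Fintype S] [DecidableEq S] [Group W] where
  M : CoxeterMatrix S
  cs : CoxeterSystem M W
  k : S → S → ℝ
  k_symm : ∀ s t, k s t = k t s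
  k_fin : ∀ s t, M s t ≠ 0 → k s t = - Real.cos (Real.pi / (M s t : ℝ))
  k_inf : ∀ s t, M s t = 0 → k s t ≤ -1
  ρ : W →* (Vec S ≃ₗ[ℝ] Vec S)
  ρ_inj : Function.Injective ρ
  ρ_simple : ∀ (s : S) (x : Vec S),
    ρ (cs.simple s) x =
      x - (2 * Bform k x (simpleRoot s) / Bform k (simpleRoot s) (simpleRoot s)) • simpleRoot s
  ρ_preserves : ∀ (w : W) (x y : Vec S), Bform k (ρ w x) (ρ w y) = Bform k x y
  lorentzian : ∃ b : Module.Basis (Fin (Fintype.card S)) ℝ (Vec S), ∀ i j,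
    Bform k (b i) (b j) =
      if i = j then (if (i : ℕ) + 1 = Fintype.card S then -1 else 1) else 0

namespace LorentzianCoxeterSystem

variable {S W : Type} [Fintype S] [DecidableEq S] [Group W]
variable (G : LorentzianCoxeterSystem S W)

/-- The root system `Φ = W(Δ)`. -/
def rootSet : Set (Vec S) := {v | ∃ (w : W) (s : S), v = G.ρ w (simpleRoot s)}

/-- The positive roots `Φ⁺ = Φ ∩ cone(Δ)`. -/
def posRootSet : Set (Vec S) := {v | v ∈ G.rootSet ∧ ∀ s, 0 ≤ v s}

/-- The set of projective roots `ℙΦ`. -/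
def projRootSet : Set (ℙ ℝ (Vec S)) :=
  {p | ∃ (v : Vec S) (hv : v ≠ 0), v ∈ G.rootSet ∧ p = Projectivization.mk ℝ v hv}

/-- The set of limit roots `E_Φ`: accumulation points of the projective roots. -/
def limitRoots : Set (ℙ ℝ (Vec S)) := {p | IsAccumPt p G.projRootSet}

/-- The projective action of `w ∈ W` on `ℙ V`. -/
def pact (w : W) (p : ℙ ℝ (Vec S)) : ℙ ℝ (Vec S) :=
  Projectivization.map ((G.ρ w : Vec S ≃ₗ[ℝ] Vec S) : Vec S →ₗ[ℝ] Vec S) (G.ρ w).injective p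

/-- The set of limit directions `E_V`. -/
def limitDirections : Set (ℙ ℝ (Vec S)) :=
  {p | ∃ (p₀ : ℙ ℝ (Vec S)) (w : ℕ → W),
    Function.Injective (fun i => G.pact (w i) p₀) ∧
    Tendsto (fun i => G.pact (w i) p₀) atTop (nhds p)}

/-- The set `𝓛_hyp`: union over pairs of positive roots `α, β` with `𝓑(α,β) < -1` of the
projectivization of the codimension-2 subspace orthogonal to both. -/
def Lhyp : Set (ℙ ℝ (Vec S)) :=
  {p | ∃ a ∈ G.posRootSet, ∃ b ∈ G.posRootSet, Bform G.k a b < -1 ∧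
    ∃ (z : Vec S) (hz : z ≠ 0), Bform G.k z a = 0 ∧ Bform G.k z b = 0 ∧
      p = Projectivization.mk ℝ z hz}

/-- The complexification of `ρ(w)`, an endomorphism of `ℂ ⊗[ℝ] V`. -/
def endC (w : W) : Module.End ℂ (ℂ ⊗[ℝ] Vec S) :=
  LinearMap.baseChange ℂ ((G.ρ w : Vec S ≃ₗ[ℝ] Vec S) : Vec S →ₗ[ℝ] Vec S)

/-- All complex eigenvalues of the complexification of `ρ(w)` have absolute value 1. -/
def AllEigenvaluesUnimodular (w : W) : Prop :=
  ∀ μ : ℂ, Module.End.HasEigenvalue (G.endC w) μ → ‖μ‖ = 1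

/-- The complexification of `ρ(w)` is diagonalizable. -/
def DiagonalizableC (w : W) : Prop :=
  (⨆ μ : ℂ, Module.End.eigenspace (G.endC w) μ) = ⊤

/-- The unimodular subspace `U_w ⊆ V`: vectors whose image in `ℂ ⊗[ℝ] V` lies in the sum of
the eigenspaces of the complexification of `ρ(w)` for eigenvalues of absolute value 1. -/
def USet (w : W) : Set (Vec S) :=
  {v | ((1 : ℂ) ⊗ₜ[ℝ] v : ℂ ⊗[ℝ] Vec S) ∈
    ⨆ (μ : ℂ) (_ : ‖μ‖ = 1), Module.End.eigenspace (G.endC w) μ}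

/-- The projective unimodular subspace `ℙ U_w`. -/
def projU (w : W) : Set (ℙ ℝ (Vec S)) :=
  {p | ∃ (v : Vec S) (hv : v ≠ 0), v ∈ G.USet w ∧ p = Projectivization.mk ℝ v hv}

/-- The product `w_n = s₁ s₂ ⋯ s_n` of the first `n` letters of the word `ω`. -/
def prefixProd (ω : ℕ → S) (n : ℕ) : W :=
  G.cs.wordProd (List.ofFn (fun i : Fin n => ω i))

/-- `ω` is an infinite reduced word: each prefix is reduced. -/
def IsInfiniteReducedWord (ω : ℕ → S) : Prop :=
  ∀ n, G.cs.length (G.prefixProd ω n) = n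

/-- The inversion set `inv(𝐰) = {w_{k-1}(α_{s_k}) : k ≥ 1}` of an infinite word. -/
def invSet (ω : ℕ → S) : Set (Vec S) :=
  {v | ∃ n : ℕ, v = G.ρ (G.prefixProd ω n) (simpleRoot (ω n))}

/-- The projective inversion set `ℙ(inv(𝐰))`. -/
def projInvSet (ω : ℕ → S) : Set (ℙ ℝ (Vec S)) :=
  {p | ∃ (v : Vec S) (hv : v ≠ 0), v ∈ G.invSet ω ∧ p = Projectivization.mk ℝ v hv}

/-- A subset `A` of the positive roots is closed if any positive root which is a nonnegative
combination of two elements of `A` is in `A`. -/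
def IsClosedRootSubset (A : Set (Vec S)) : Prop :=
  ∀ a ∈ A, ∀ b ∈ A, ∀ x y : ℝ, 0 ≤ x → 0 ≤ y →
    x • a + y • b ∈ G.posRootSet → x • a + y • b ∈ A

end LorentzianCoxeterSystem

/-! ### Basic lemmas about Lorentzian Coxeter systems -/

namespace LorentzianCoxeterSystem

variable {S W : Type} [Fintype S] [DecidableEq S] [Group W] (G : LorentzianCoxeterSystem S W)

lemma k_diag (s : S) : G.k s s = 1 := by
  have h1 : G.M s s = 1 := G.M.diagonal s
  have h2 := G.k_fin s s (by rw [h1]; norm_num)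
  rw [h2, h1]
  norm_num

lemma B_single_single (s t : S) : Bform G.k (simpleRoot s) (simpleRoot t) = G.k s t :=
  Bform_single_single G.k s t

lemma Bss (s : S) : Bform G.k (simpleRoot s) (simpleRoot s) = 1 := by
  rw [B_single_single, k_diag]

lemma rho_simple_apply (s : S) (x : Vec S) :
    G.ρ (G.cs.simple s) x = x - (2 * Bform G.k x (simpleRoot s)) • simpleRoot s := by
  rw [G.ρ_simple, Bss]
  norm_num

lemma rho_simple_self (s : S) : G.ρ (G.cs.simple s) (simpleRoot s) = -(simpleRoot s) := by
  rw [rho_simple_apply, Bss]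
  module

lemma rho_simple_other (s t : S) :
    G.ρ (G.cs.simple s) (simpleRoot t) = simpleRoot t + (2 * -(G.k s t)) • simpleRoot s := by
  rw [rho_simple_apply, B_single_single, G.k_symm t s]
  module

lemma rho_mul_apply (a b : W) (x : Vec S) : G.ρ (a * b) x = G.ρ a (G.ρ b x) := by
  rw [map_mul]
  rfl

lemma rho_B_invariant (w : W) (x y : Vec S) : Bform G.k (G.ρ w x) (G.ρ w y) = Bform G.k x y :=
  G.ρ_preserves w x y

/-- The key dihedral computation. -/
lemma rho_alt_simpleRoot (s t : S) (j : ℕ) :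
    G.ρ (G.cs.wordProd (CoxeterSystem.alternatingWord s t j)) (simpleRoot s) =
      (if Even j then chebU (-(G.k s t)) (j + 1) else chebU (-(G.k s t)) j) • simpleRoot s +
      (if Even j then chebU (-(G.k s t)) j else chebU (-(G.k s t)) (j + 1)) • simpleRoot t := by
  set c := -(G.k s t) with hc
  induction j with
  | zero =>
    simp only [Even.zero, if_true, chebU_zero, chebU_one]
    have : CoxeterSystem.alternatingWord s t 0 = [] := rfl
    rw [this, CoxeterSystem.wordProd_nil, map_one]
    show simpleRoot s = (1 : ℝ) • simpleRoot s + (0 : ℝ) • simpleRoot t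
    module
  | succ j ih =>
    rw [CoxeterSystem.alternatingWord_succ', CoxeterSystem.wordProd_cons, rho_mul_apply, ih]
    by_cases hj : Even j
    · have hodd : ¬ Even (j + 1) := by simp [Nat.even_add_one, hj]
      simp only [hj, if_true, hodd, if_false]
      rw [map_add, map_smul, map_smul]
      have h1 : G.ρ (G.cs.simple t) (simpleRoot s) =
          simpleRoot s + (2 * c) • simpleRoot t := by
        rw [rho_simple_other, G.k_symm t s, hc]
      rw [h1, rho_simple_self]
      rw [show j + 1 + 1 = j + 2 from rfl, chebU_two]
      module
    · have heven : Even (j + 1) := Nat.even_add_one.mpr hj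
      simp only [hj, if_false, heven, if_true]
      rw [map_add, map_smul, map_smul]
      have h1 : G.ρ (G.cs.simple s) (simpleRoot t) =
          simpleRoot t + (2 * c) • simpleRoot s := by
        rw [rho_simple_other, hc]
      rw [h1, rho_simple_self]
      rw [show j + 1 + 1 = j + 2 from rfl, chebU_two]
      module

/-- Classification: a reduced word in two letters which remains reduced after appending `s`
is the alternating word ending in `t`. -/
lemma eq_alternatingWord_of_reduced :
    ∀ (j : ℕ) (s t : S) (l : List S), l.length = j →
      G.cs.IsReduced l → (∀ a ∈ l, a = s ∨ a = t) →
      G.cs.length (G.cs.wordProd l * G.cs.simple s) = j + 1 →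
      l = CoxeterSystem.alternatingWord s t j := by
  intro j
  induction j with
  | zero =>
    intro s t l hlen _ _ _
    rw [List.length_eq_zero_iff] at hlen
    rw [hlen]
    rfl
  | succ j ih =>
    intro s t l hlen hred hlet hls
    rcases List.eq_nil_or_concat l with rfl | ⟨l', a, rfl⟩
    · simp at hlen
    rw [List.concat_eq_append] at *
    have hlen' : l'.length = j := by
      simp at hlen
      omega
    have hπ : G.cs.wordProd (l' ++ [a]) = G.cs.wordProd l' * G.cs.simple a := by
      rw [CoxeterSystem.wordProd_append, CoxeterSystem.wordProd_singleton]
    have ha : a = s ∨ a = t := hlet a (by simp)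
    have hredl : G.cs.length (G.cs.wordProd (l' ++ [a])) = j + 1 := by
      have := hred
      unfold CoxeterSystem.IsReduced at this
      rw [this, hlen]
    rcases ha with rfl | rfl
    · -- impossible: appending s would shorten
      exfalso
      have : G.cs.wordProd (l' ++ [a]) * G.cs.simple a = G.cs.wordProd l' := by
        rw [hπ, G.cs.simple_mul_simple_cancel_right]
      rw [this] at hls
      have hle : G.cs.length (G.cs.wordProd l') ≤ j := by
        have := G.cs.length_wordProd_le l'
        omega
      omega
    · -- a = t
      have hredl' : G.cs.IsReduced l' := by
        have := hred.take j
        rwa [show (l' ++ [a]).take j = l' by rw [← hlen']; exact List.take_left (l₁ := l') (l₂ := [a])] at this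
      have hkey : G.cs.length (G.cs.wordProd l' * G.cs.simple a) = j + 1 := by
        rw [← hπ, hredl]
      have hl' : l' = CoxeterSystem.alternatingWord a s j := by
        refine ih a s l' hlen' hredl' (fun b hb => ?_) hkey
        rcases hlet b (by simp [hb]) with h | h
        · right; exact h
        · left; exact h
      rw [hl', show CoxeterSystem.alternatingWord s a (j + 1) =
        (CoxeterSystem.alternatingWord a s j).concat a from
          CoxeterSystem.alternatingWord_succ s a j, List.concat_eq_append]

end LorentzianCoxeterSystem

lemma simpleRoot_nonneg' {S : Type} [DecidableEq S] (s i : S) : 0 ≤ simpleRoot s i := by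
  unfold simpleRoot
  rw [Pi.single_apply]
  split <;> norm_num

namespace LorentzianCoxeterSystem

variable {S W : Type} [Fintype S] [DecidableEq S] [Group W] (G : LorentzianCoxeterSystem S W)

lemma rho_one_apply (x : Vec S) : G.ρ 1 x = x := by rw [map_one]; rfl

/-- The positivity theorem for the geometric representation: if `ℓ(ws) = ℓ(w) + 1` then
`w(αₛ)` is a nonnegative combination of simple roots. -/
theorem rho_pos_aux : ∀ (N : ℕ) (w : W) (s : S), G.cs.length w ≤ N →
    G.cs.length (w * G.cs.simple s) = G.cs.length w + 1 →
    ∀ i, 0 ≤ (G.ρ w) (simpleRoot s) i := by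
  intro N
  induction N with
  | zero =>
    intro w s hw _ i
    have hone : w = 1 := G.cs.length_eq_zero_iff.mp (Nat.le_zero.mp hw)
    rw [hone, rho_one_apply]
    exact simpleRoot_nonneg' s i
  | succ N IH =>
    intro w s hw hws i
    by_cases hw1 : w = 1
    · rw [hw1, rho_one_apply]; exact simpleRoot_nonneg' s i
    obtain ⟨t, ht⟩ := G.cs.exists_rightDescent_of_ne_one hw1
    rw [CoxeterSystem.isRightDescent_iff] at ht
    have hts : t ≠ s := by
      intro h; rw [h] at ht; omega
    classical
    set P : ℕ → Prop := fun j => ∃ l : List S, l.length = j ∧ (∀ a ∈ l, a = s ∨ a = t) ∧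
      G.cs.length (w * (G.cs.wordProd l)⁻¹) + j = G.cs.length w with hP
    have hP1 : P 1 := by
      refine ⟨[t], rfl, by simp, ?_⟩
      rw [CoxeterSystem.wordProd_singleton, CoxeterSystem.inv_simple]
      omega
    have hPbound : ∀ j, P j → j ≤ G.cs.length w := by
      rintro j ⟨l, h1, h2, h3⟩
      omega
    set jm := Nat.findGreatest P (G.cs.length w) with hjmdef
    have hPjm : P jm := Nat.findGreatest_spec (hPbound 1 hP1) hP1
    have hjm1 : 1 ≤ jm := Nat.le_findGreatest (hPbound 1 hP1) hP1
    have hmax : ¬ P (jm + 1) := by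
      intro hPj
      exact absurd hPj (Nat.findGreatest_is_greatest (by omega) (hPbound _ hPj))
    obtain ⟨l, hlen, hlet, hdec⟩ := hPjm
    set u := w * (G.cs.wordProd l)⁻¹ with hu
    set v := G.cs.wordProd l with hv
    have huv : u * v = w := by rw [hu, hv]; group
    have hascent : ∀ a, (a = s ∨ a = t) → G.cs.length (u * G.cs.simple a) = G.cs.length u + 1 := by
      intro a ha
      rcases G.cs.length_mul_simple u a with h | h
      · exact h
      · exfalso
        apply hmax
        refine ⟨a :: l, by simp [hlen], ?_, ?_⟩
        · intro b hb
          rcases List.mem_cons.mp hb with rfl | hb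
          · exact ha
          · exact hlet b hb
        · rw [CoxeterSystem.wordProd_cons, mul_inv_rev, CoxeterSystem.inv_simple, ← mul_assoc]
          have hfold : w * (G.cs.wordProd l)⁻¹ * G.cs.simple a = u * G.cs.simple a := by
            rw [hu]
          rw [hfold]
          omega
    have hlu : G.cs.length u + jm = G.cs.length w := hdec
    have hlv : G.cs.length v = jm := by
      have h1 : G.cs.length v ≤ jm := by
        rw [hv, ← hlen]; exact G.cs.length_wordProd_le l
      have h2 := G.cs.length_mul_le u v
      rw [huv] at h2
      omega
    have hredl : G.cs.IsReduced l := by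
      unfold CoxeterSystem.IsReduced
      rw [← hv, hlen]
      exact hlv
    have hvs : G.cs.length (v * G.cs.simple s) = jm + 1 := by
      have hle : G.cs.length (v * G.cs.simple s) ≤ jm + 1 := by
        have := G.cs.length_mul_le v (G.cs.simple s)
        rw [G.cs.length_simple] at this
        omega
      have h2 : w * G.cs.simple s = u * (v * G.cs.simple s) := by rw [← huv]; group
      have h3 := G.cs.length_mul_le u (v * G.cs.simple s)
      rw [← h2] at h3
      omega
    have hvs' : G.cs.length (G.cs.wordProd l * G.cs.simple s) = jm + 1 := by
      rw [← hv]; exact hvs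
    have hl_alt : l = CoxeterSystem.alternatingWord s t jm :=
      G.eq_alternatingWord_of_reduced jm s t l hlen hredl hlet hvs'
    have hred2 : G.cs.IsReduced (CoxeterSystem.alternatingWord t s (jm + 1)) := by
      have heq : CoxeterSystem.alternatingWord t s (jm + 1) = l.concat s := by
        rw [hl_alt, CoxeterSystem.alternatingWord_succ]
      have hlval : G.cs.length (G.cs.wordProd (l.concat s)) = jm + 1 := by
        rw [CoxeterSystem.wordProd_concat]
        exact hvs'
      unfold CoxeterSystem.IsReduced
      rw [heq, hlval, List.length_concat, hlen]
    have hMbound : G.M t s = 0 ∨ jm + 1 ≤ G.M t s := by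
      by_cases hM0 : G.M t s = 0
      · left; exact hM0
      · right
        by_contra hgt
        push_neg at hgt
        exact CoxeterSystem.not_isReduced_alternatingWord G.cs t s hM0 (by omega) hred2
    set c := -(G.k s t) with hc
    have hA : 0 ≤ chebU c jm ∧ 0 ≤ chebU c (jm + 1) := by
      rcases hMbound with hM0 | hMle
      · have hM0' : G.M s t = 0 := by rw [G.M.symmetric s t]; exact hM0
        have hk := G.k_inf s t hM0'
        have hc1 : 1 ≤ c := by rw [hc]; linarith
        exact ⟨(chebU_nonneg_inf hc1 jm).1, (chebU_nonneg_inf hc1 (jm + 1)).1⟩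
      · have hMst : G.M s t = G.M t s := G.M.symmetric s t
        have hM0' : G.M s t ≠ 0 := by omega
        have hk := G.k_fin s t hM0'
        have hcval : c = Real.cos (Real.pi / (G.M s t : ℝ)) := by rw [hc, hk, neg_neg]
        have hm2 : 2 ≤ G.M s t := by
          have h1 := G.M.off_diagonal s t (Ne.symm hts)
          omega
        rw [hcval]
        exact ⟨chebU_nonneg_fin hm2 (by omega), chebU_nonneg_fin hm2 (by omega)⟩
    have hvapply := G.rho_alt_simpleRoot s t jm
    rw [← hl_alt, ← hv, ← hc] at hvapply
    have hw_uv : G.ρ w (simpleRoot s) = G.ρ u (G.ρ v (simpleRoot s)) := by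
      rw [← huv, rho_mul_apply]
    rw [hw_uv, hvapply, map_add, map_smul, map_smul]
    have hlus : G.cs.length u ≤ N := by omega
    have hIHs := IH u s hlus (hascent s (Or.inl rfl))
    have hIHt := IH u t hlus (hascent t (Or.inr rfl))
    simp only [Pi.add_apply, Pi.smul_apply, smul_eq_mul]
    rcases hA with ⟨hA1, hA2⟩
    by_cases hje : Even jm
    · simp only [hje, if_true]
      exact add_nonneg (mul_nonneg hA2 (hIHs i)) (mul_nonneg hA1 (hIHt i))
    · simp only [hje, if_false]
      exact add_nonneg (mul_nonneg hA1 (hIHs i)) (mul_nonneg hA2 (hIHt i))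

/-- Positivity of roots. -/
theorem rho_simpleRoot_nonneg {w : W} {s : S}
    (h : G.cs.length (w * G.cs.simple s) = G.cs.length w + 1) :
    ∀ i, 0 ≤ (G.ρ w) (simpleRoot s) i :=
  G.rho_pos_aux (G.cs.length w) w s le_rfl h

end LorentzianCoxeterSystem

namespace LorentzianCoxeterSystem

set_option linter.unusedSectionVars false

variable {S W : Type} [Fintype S] [DecidableEq S] [Group W] (G : LorentzianCoxeterSystem S W)
variable (ω : ℕ → S)

/-- The segment product `w_a⁻¹ w_b`. -/
def seg (a b : ℕ) : W := (G.prefixProd ω a)⁻¹ * G.prefixProd ω b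

lemma prefixProd_succ (n : ℕ) :
    G.prefixProd ω (n + 1) = G.prefixProd ω n * G.cs.simple (ω n) := by
  unfold prefixProd
  rw [List.ofFn_succ', CoxeterSystem.wordProd_concat]
  simp only [Fin.coe_castSucc, Fin.val_last]

lemma seg_self (a : ℕ) : G.seg ω a a = 1 := by unfold seg; group

lemma seg_succ (a b : ℕ) : G.seg ω a (b + 1) = G.seg ω a b * G.cs.simple (ω b) := by
  unfold seg
  rw [prefixProd_succ]
  group

lemma seg_cons (a b : ℕ) : G.cs.simple (ω a) * G.seg ω (a + 1) b = G.seg ω a b := by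
  unfold seg
  rw [prefixProd_succ]
  have h := G.cs.simple_mul_simple_self (ω a)
  calc G.cs.simple (ω a) * ((G.prefixProd ω a * G.cs.simple (ω a))⁻¹ * G.prefixProd ω b)
      = (G.cs.simple (ω a) * (G.cs.simple (ω a))⁻¹) * ((G.prefixProd ω a)⁻¹ * G.prefixProd ω b) := by
        group
    _ = (G.prefixProd ω a)⁻¹ * G.prefixProd ω b := by
        rw [mul_inv_cancel]
        group

lemma prefix_mul_seg (a b : ℕ) : G.prefixProd ω a * G.seg ω a b = G.prefixProd ω b := by
  unfold seg
  group

lemma length_seg_le (a b : ℕ) (hab : a ≤ b) : G.cs.length (G.seg ω a b) ≤ b - a := by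
  induction b, hab using Nat.le_induction with
  | base => rw [seg_self]; simp
  | succ b hab ih =>
    rw [seg_succ]
    have := G.cs.length_mul_le (G.seg ω a b) (G.cs.simple (ω b))
    rw [G.cs.length_simple] at this
    omega

lemma length_seg (hred : G.IsInfiniteReducedWord ω) (a b : ℕ) (hab : a ≤ b) : G.cs.length (G.seg ω a b) = b - a := by
  have h1 := length_seg_le G ω a b hab
  have h2 := G.cs.length_mul_le (G.prefixProd ω a) (G.seg ω a b)
  rw [prefix_mul_seg, hred a, hred b] at h2
  omega

/-- The inversion roots. -/
def betav (n : ℕ) : Vec S := G.ρ (G.prefixProd ω n) (simpleRoot (ω n))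

lemma length_prefix_mul_simple (hred : G.IsInfiniteReducedWord ω) (n : ℕ) :
    G.cs.length (G.prefixProd ω n * G.cs.simple (ω n)) = G.cs.length (G.prefixProd ω n) + 1 := by
  rw [← prefixProd_succ, hred n, hred (n + 1)]

lemma betav_nonneg (hred : G.IsInfiniteReducedWord ω) (n : ℕ) (i : S) : 0 ≤ betav G ω n i :=
  G.rho_simpleRoot_nonneg (length_prefix_mul_simple G ω hred n) i

lemma B_betav_self (n : ℕ) : Bform G.k (betav G ω n) (betav G ω n) = 1 := by
  unfold betav
  rw [G.ρ_preserves, Bss]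

lemma betav_ne_zero (n : ℕ) : betav G ω n ≠ 0 := by
  intro h
  have := B_betav_self G ω n
  rw [h, Bform_zero_left] at this
  norm_num at this

lemma betav_eq_pos (hred : G.IsInfiniteReducedWord ω) (k j : ℕ) (hkj : k ≤ j) :
    ∃ r : Vec S, (∀ i, 0 ≤ r i) ∧ Bform G.k r r = 1 ∧
      betav G ω j = G.ρ (G.prefixProd ω k) r := by
  refine ⟨G.ρ (G.seg ω k j) (simpleRoot (ω j)), ?_, ?_, ?_⟩
  · apply G.rho_simpleRoot_nonneg
    have h1 : G.seg ω k j * G.cs.simple (ω j) = G.seg ω k (j + 1) := (seg_succ G ω k j).symm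
    rw [h1, length_seg G ω hred k (j + 1) (by omega), length_seg G ω hred k j hkj]
    omega
  · rw [G.ρ_preserves, Bss]
  · unfold betav
    rw [← rho_mul_apply, prefix_mul_seg]

lemma betav_eq_neg (hred : G.IsInfiniteReducedWord ω) (k j : ℕ) (hjk : j < k) :
    ∃ r : Vec S, (∀ i, 0 ≤ r i) ∧ Bform G.k r r = 1 ∧
      betav G ω j = G.ρ (G.prefixProd ω k) (-r) := by
  refine ⟨G.ρ ((G.seg ω (j + 1) k)⁻¹) (simpleRoot (ω j)), ?_, ?_, ?_⟩
  · apply G.rho_simpleRoot_nonneg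
    have h1 : G.cs.length ((G.seg ω (j + 1) k)⁻¹ * G.cs.simple (ω j)) =
        G.cs.length (G.cs.simple (ω j) * G.seg ω (j + 1) k) := by
      rw [← G.cs.length_inv]
      congr 1
      rw [mul_inv_rev, CoxeterSystem.inv_simple, inv_inv]
    rw [h1, seg_cons G ω j k, length_seg G ω hred j k (by omega), G.cs.length_inv,
      length_seg G ω hred (j + 1) k (by omega)]
    omega
  · rw [G.ρ_preserves, Bss]
  · rw [map_neg, ← rho_mul_apply]
    have h2 : G.prefixProd ω k * (G.seg ω (j + 1) k)⁻¹ = G.prefixProd ω (j + 1) := by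
      unfold seg
      group
    rw [h2]
    unfold betav
    rw [prefixProd_succ, rho_mul_apply, rho_simple_self, map_neg, neg_neg]

end LorentzianCoxeterSystem

section SigmaSum

set_option linter.unusedSectionVars false

variable {S : Type} [Fintype S] [DecidableEq S]

/-- Sum of coordinates. -/
def sigmaSum (v : Vec S) : ℝ := ∑ t, v t

lemma sigmaSum_add (a b : Vec S) : sigmaSum (a + b) = sigmaSum a + sigmaSum b := by
  unfold sigmaSum
  rw [← Finset.sum_add_distrib]
  rfl

lemma sigmaSum_smul (c : ℝ) (a : Vec S) : sigmaSum (c • a) = c * sigmaSum a := by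
  unfold sigmaSum
  rw [Finset.mul_sum]
  rfl

lemma sigmaSum_nonneg {v : Vec S} (h : ∀ i, 0 ≤ v i) : 0 ≤ sigmaSum v :=
  Finset.sum_nonneg fun i _ => h i

lemma sigmaSum_pos {v : Vec S} (h : ∀ i, 0 ≤ v i) (h0 : v ≠ 0) : 0 < sigmaSum v := by
  obtain ⟨i, hi⟩ : ∃ i, v i ≠ 0 := by
    by_contra hc; push_neg at hc; exact h0 (funext hc)
  exact Finset.sum_pos' (fun j _ => h j) ⟨i, Finset.mem_univ i, lt_of_le_of_ne (h i) (Ne.symm hi)⟩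

lemma norm_le_sigmaSum {v : Vec S} (h : ∀ i, 0 ≤ v i) : ‖v‖ ≤ sigmaSum v := by
  refine pi_norm_le_iff_of_nonneg (sigmaSum_nonneg h) |>.mpr fun i => ?_
  rw [Real.norm_eq_abs, abs_of_nonneg (h i)]
  exact Finset.single_le_sum (fun j _ => h j) (Finset.mem_univ i)

lemma sigmaSum_le_card_norm (v : Vec S) : sigmaSum v ≤ (Fintype.card S : ℝ) * ‖v‖ := by
  unfold sigmaSum
  calc ∑ t, v t ≤ ∑ t : S, ‖v‖ := by
        refine Finset.sum_le_sum fun t _ => ?_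
        have := norm_le_pi_norm v t
        rw [Real.norm_eq_abs] at this
        exact le_trans (le_abs_self _) this
    _ = (Fintype.card S : ℝ) * ‖v‖ := by
        rw [Finset.sum_const, Finset.card_univ, nsmul_eq_mul]

lemma continuous_sigmaSum : Continuous (sigmaSum (S := S)) := by
  unfold sigmaSum
  exact continuous_finset_sum _ fun t _ => continuous_apply t

lemma Bx0_eq {k : S → S → ℝ} {x₀ : Vec S} (hx₀ : ∀ t, Bform k x₀ (Pi.single t 1) = -1)
    (v : Vec S) : Bform k x₀ v = - sigmaSum v := by
  rw [Bform_eq_sum_right]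
  unfold sigmaSum
  rw [← Finset.sum_neg_distrib]
  refine Finset.sum_congr rfl fun t _ => ?_
  rw [hx₀ t]
  ring

/-- The constant bounding the bilinear form. -/
def kAbs (k : S → S → ℝ) : ℝ := ∑ s : S, ∑ t : S, |k s t|

lemma kAbs_nonneg (k : S → S → ℝ) : 0 ≤ kAbs k :=
  Finset.sum_nonneg fun s _ => Finset.sum_nonneg fun t _ => abs_nonneg _

lemma one_le_kAbs [Nonempty S] {k : S → S → ℝ} (hdiag : ∀ s, k s s = 1) : 1 ≤ kAbs k := by
  obtain ⟨s₀⟩ := ‹Nonempty S›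
  have h1 : (1 : ℝ) = |k s₀ s₀| := by rw [hdiag]; norm_num
  rw [h1]
  calc |k s₀ s₀| ≤ ∑ t, |k s₀ t| :=
        Finset.single_le_sum (f := fun t => |k s₀ t|) (fun t _ => abs_nonneg _)
          (Finset.mem_univ s₀)
    _ ≤ kAbs k := by
        unfold kAbs
        exact Finset.single_le_sum (f := fun s => ∑ t, |k s t|)
          (fun s _ => Finset.sum_nonneg fun t _ => abs_nonneg _) (Finset.mem_univ s₀)

lemma abs_Bform_le_kAbs (k : S → S → ℝ) (x y : Vec S) :
    |Bform k x y| ≤ kAbs k * (‖x‖ * ‖y‖) := abs_Bform_le k x y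

lemma norm_ge_c0 {k : S → S → ℝ} (hdiag : ∀ s, k s s = 1) {v : Vec S}
    (hv : Bform k v v = 1) : Real.sqrt (1 / kAbs k) ≤ ‖v‖ := by
  rcases isEmpty_or_nonempty S with hS | hS
  · exfalso
    have : Bform k v v = 0 := by
      unfold Bform
      rw [Finset.univ_eq_empty, Finset.sum_empty]
    rw [hv] at this
    norm_num at this
  have hK : 1 ≤ kAbs k := one_le_kAbs hdiag
  have h1 : (1 : ℝ) ≤ kAbs k * (‖v‖ * ‖v‖) := by
    have := abs_Bform_le_kAbs k v v
    rw [hv] at this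
    simpa using this
  have h2 : 1 / kAbs k ≤ ‖v‖ * ‖v‖ := by
    rw [div_le_iff₀ (by linarith)]
    linarith [mul_comm (kAbs k) (‖v‖ * ‖v‖)]
  calc Real.sqrt (1 / kAbs k) ≤ Real.sqrt (‖v‖ * ‖v‖) := Real.sqrt_le_sqrt h2
    _ = ‖v‖ := Real.sqrt_mul_self (norm_nonneg v)

lemma c0_pos {k : S → S → ℝ} [Nonempty S] (hdiag : ∀ s, k s s = 1) :
    0 < Real.sqrt (1 / kAbs k) := by
  have hK : 1 ≤ kAbs k := one_le_kAbs hdiag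
  apply Real.sqrt_pos.mpr
  positivity

lemma norm_single_one (s : S) : ‖(Pi.single s 1 : Vec S)‖ = 1 := by
  apply le_antisymm
  · refine pi_norm_le_iff_of_nonneg (by norm_num) |>.mpr fun i => ?_
    rw [Real.norm_eq_abs, Pi.single_apply]
    split <;> norm_num
  · have := norm_le_pi_norm (Pi.single s 1 : Vec S) s
    rw [Real.norm_eq_abs, Pi.single_eq_same] at this
    simpa using this

end SigmaSum

namespace LorentzianCoxeterSystem

set_option linter.unusedSectionVars false

variable {S W : Type} [Fintype S] [DecidableEq S] [Group W] (G : LorentzianCoxeterSystem S W)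
variable (ω : ℕ → S) (x₀ : Vec S)

/-- The orbit of the base point. -/
def yv (k : ℕ) : Vec S := G.ρ (G.prefixProd ω k) x₀

lemma prefixProd_zero : G.prefixProd ω 0 = 1 := by
  unfold prefixProd
  have h : (List.ofFn fun i : Fin 0 => ω i) = [] := rfl
  rw [h, CoxeterSystem.wordProd_nil]

lemma yv_zero : yv G ω x₀ 0 = x₀ := by
  unfold yv
  rw [prefixProd_zero, rho_one_apply]

lemma Bform_neg_right' (k : S → S → ℝ) (x r : Vec S) : Bform k x (-r) = - Bform k x r := by
  rw [← neg_one_smul ℝ r, Bform_smul_right]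
  ring

lemma yv_succ (hx₀ : ∀ t, Bform G.k x₀ (Pi.single t 1) = -1) (k : ℕ) :
    yv G ω x₀ (k + 1) = yv G ω x₀ k + (2 : ℝ) • betav G ω k := by
  unfold yv betav
  rw [prefixProd_succ, rho_mul_apply]
  have h1 : G.ρ (G.cs.simple (ω k)) x₀ = x₀ + (2 : ℝ) • simpleRoot (ω k) := by
    rw [rho_simple_apply]
    have h2 : Bform G.k x₀ (simpleRoot (ω k)) = -1 := hx₀ (ω k)
    rw [h2]
    module
  rw [h1, map_add, map_smul]

lemma B_yv_betav_pos (hred : G.IsInfiniteReducedWord ω)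
    (hx₀ : ∀ t, Bform G.k x₀ (Pi.single t 1) = -1) {j k : ℕ} (hjk : j < k) :
    0 < Bform G.k (yv G ω x₀ k) (betav G ω j) := by
  obtain ⟨r, hr1, hr2, hr3⟩ := betav_eq_neg G ω hred k j hjk
  have hrne : r ≠ 0 := by
    intro h
    rw [h, Bform_zero_left] at hr2
    norm_num at hr2
  rw [hr3]
  unfold yv
  rw [G.ρ_preserves, Bform_neg_right', Bx0_eq hx₀]
  simpa using sigmaSum_pos hr1 hrne

lemma B_yv_betav_neg (hred : G.IsInfiniteReducedWord ω)
    (hx₀ : ∀ t, Bform G.k x₀ (Pi.single t 1) = -1) {j k : ℕ} (hkj : k ≤ j) :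
    Bform G.k (yv G ω x₀ k) (betav G ω j) ≤ -Real.sqrt (1 / kAbs G.k) := by
  obtain ⟨r, hr1, hr2, hr3⟩ := betav_eq_pos G ω hred k j hkj
  rw [hr3]
  unfold yv
  rw [G.ρ_preserves, Bx0_eq hx₀]
  have h1 : Real.sqrt (1 / kAbs G.k) ≤ ‖r‖ := norm_ge_c0 G.k_diag hr2
  have h2 : ‖r‖ ≤ sigmaSum r := norm_le_sigmaSum hr1
  linarith

lemma yv_ne_zero (hred : G.IsInfiniteReducedWord ω)
    (hx₀ : ∀ t, Bform G.k x₀ (Pi.single t 1) = -1) (k : ℕ) : yv G ω x₀ k ≠ 0 := by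
  intro h
  have h1 := B_yv_betav_neg G ω x₀ hred hx₀ (le_refl k)
  rw [h, Bform_zero_left] at h1
  have hne : Nonempty S := by
    rcases isEmpty_or_nonempty S with hS | hS
    · exfalso
      have := betav_ne_zero G ω k
      exact this (funext fun i => (IsEmpty.false i).elim)
    · exact hS
  have := c0_pos (S := S) G.k_diag
  linarith

lemma B_betav_pair (w : W) (r r' : Vec S) :
    Bform G.k (G.ρ w r) (G.ρ w r') = Bform G.k r r' := G.ρ_preserves w r r'

lemma sigma_yv_growth (hred : G.IsInfiniteReducedWord ω)
    (hx₀ : ∀ t, Bform G.k x₀ (Pi.single t 1) = -1) (k : ℕ) :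
    sigmaSum x₀ + 2 * Real.sqrt (1 / kAbs G.k) * k ≤ sigmaSum (yv G ω x₀ k) := by
  induction k with
  | zero => rw [yv_zero]; simp
  | succ k ih =>
    rw [yv_succ G ω x₀ hx₀ k, sigmaSum_add, sigmaSum_smul]
    have h1 : Real.sqrt (1 / kAbs G.k) ≤ sigmaSum (betav G ω k) := by
      have ha := norm_ge_c0 G.k_diag (B_betav_self G ω k)
      have hb := norm_le_sigmaSum (fun i => betav_nonneg G ω hred k i)
      linarith
    push_cast
    linarith

lemma tendsto_norm_yv (hred : G.IsInfiniteReducedWord ω)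
    (hx₀ : ∀ t, Bform G.k x₀ (Pi.single t 1) = -1) :
    Filter.Tendsto (fun k => ‖yv G ω x₀ k‖) Filter.atTop Filter.atTop := by
  have hne : Nonempty S := by
    rcases isEmpty_or_nonempty S with hS | hS
    · exact absurd (funext fun i => (IsEmpty.false i).elim) (betav_ne_zero G ω 0)
    · exact hS
  have hcard : (0 : ℝ) < (Fintype.card S : ℝ) := by
    have := Fintype.card_pos (α := S)
    exact_mod_cast this
  have hc0 : 0 < Real.sqrt (1 / kAbs G.k) := c0_pos (S := S) G.k_diag
  set c0 := Real.sqrt (1 / kAbs G.k) with hc0def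
  have hlow : ∀ k : ℕ, (sigmaSum x₀ + 2 * c0 * k) / (Fintype.card S : ℝ) ≤ ‖yv G ω x₀ k‖ := by
    intro k
    rw [div_le_iff₀ hcard]
    calc sigmaSum x₀ + 2 * c0 * k ≤ sigmaSum (yv G ω x₀ k) := sigma_yv_growth G ω x₀ hred hx₀ k
      _ ≤ (Fintype.card S : ℝ) * ‖yv G ω x₀ k‖ := sigmaSum_le_card_norm _
      _ = ‖yv G ω x₀ k‖ * (Fintype.card S : ℝ) := mul_comm _ _
  refine Filter.tendsto_atTop_mono hlow ?_
  apply Filter.Tendsto.atTop_div_const hcard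
  apply Filter.tendsto_atTop_add_const_left
  have h2 : Filter.Tendsto (fun k : ℕ => (k : ℝ)) Filter.atTop Filter.atTop :=
    tendsto_natCast_atTop_atTop
  exact Filter.Tendsto.const_mul_atTop (by linarith) h2

lemma yv_coord_ge (hred : G.IsInfiniteReducedWord ω)
    (hx₀ : ∀ t, Bform G.k x₀ (Pi.single t 1) = -1) (k : ℕ) (i : S) :
    x₀ i ≤ yv G ω x₀ k i := by
  induction k with
  | zero => rw [yv_zero]
  | succ k ih =>
    rw [yv_succ G ω x₀ hx₀ k]
    have := betav_nonneg G ω hred k i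
    simp only [Pi.add_apply, Pi.smul_apply, smul_eq_mul]
    linarith

end LorentzianCoxeterSystem

namespace LorentzianCoxeterSystem

set_option linter.unusedSectionVars false

variable {S W : Type} [Fintype S] [DecidableEq S] [Group W] (G : LorentzianCoxeterSystem S W)
variable (ω : ℕ → S)

/-- The reflection along the `n`-th inversion root. -/
def reflw (n : ℕ) : W := G.prefixProd ω (n + 1) * (G.prefixProd ω n)⁻¹

lemma rho_reflw_apply (n : ℕ) (x : Vec S) :
    G.ρ (reflw G ω n) x = x - (2 * Bform G.k x (betav G ω n)) • betav G ω n := by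
  unfold reflw
  have hsplit : G.prefixProd ω (n + 1) * (G.prefixProd ω n)⁻¹ =
      G.prefixProd ω n * (G.cs.simple (ω n) * (G.prefixProd ω n)⁻¹) := by
    rw [prefixProd_succ]; group
  rw [hsplit, rho_mul_apply, rho_mul_apply, rho_simple_apply, map_sub, map_smul]
  have h1 : G.ρ (G.prefixProd ω n) (G.ρ ((G.prefixProd ω n)⁻¹) x) = x := by
    rw [← rho_mul_apply, mul_inv_cancel, rho_one_apply]
  rw [h1]
  have h2 : Bform G.k (G.ρ ((G.prefixProd ω n)⁻¹) x) (simpleRoot (ω n)) =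
      Bform G.k x (betav G ω n) := by
    have h3 := G.ρ_preserves (G.prefixProd ω n) (G.ρ ((G.prefixProd ω n)⁻¹) x) (simpleRoot (ω n))
    rw [h1] at h3
    exact h3.symm
  rw [h2]
  rfl

lemma betav_injective (hred : G.IsInfiniteReducedWord ω) :
    Function.Injective (betav G ω) := by
  have aux : ∀ j j', j < j' → betav G ω j ≠ betav G ω j' := by
    intro j j' hlt heq
    have hmapeq : G.ρ (reflw G ω j) = G.ρ (reflw G ω j') := by
      apply DFunLike.ext
      intro x
      rw [rho_reflw_apply, rho_reflw_apply, heq]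
    have heqw : reflw G ω j = reflw G ω j' := G.ρ_inj hmapeq
    have h2 : reflw G ω j * G.prefixProd ω j' = G.prefixProd ω j * G.seg ω (j + 1) j' := by
      unfold reflw
      have e1 : (G.prefixProd ω j)⁻¹ * G.prefixProd ω j' = G.seg ω j j' := rfl
      have e2 : G.prefixProd ω (j + 1) * ((G.prefixProd ω j)⁻¹ * G.prefixProd ω j') =
          G.prefixProd ω (j + 1) * (G.cs.simple (ω j) * G.seg ω (j + 1) j') := by
        rw [e1, seg_cons]
      calc G.prefixProd ω (j + 1) * (G.prefixProd ω j)⁻¹ * G.prefixProd ω j'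
          = G.prefixProd ω (j + 1) * ((G.prefixProd ω j)⁻¹ * G.prefixProd ω j') := by group
        _ = G.prefixProd ω (j + 1) * (G.cs.simple (ω j) * G.seg ω (j + 1) j') := e2
        _ = (G.prefixProd ω (j + 1) * G.cs.simple (ω j)) * G.seg ω (j + 1) j' := by group
        _ = G.prefixProd ω j * G.seg ω (j + 1) j' := by
            rw [prefixProd_succ, G.cs.simple_mul_simple_cancel_right]
    have h1 : reflw G ω j' * G.prefixProd ω j' = G.prefixProd ω (j' + 1) := by
      unfold reflw; group
    rw [heqw, h1] at h2
    have h3 := G.cs.length_mul_le (G.prefixProd ω j) (G.seg ω (j + 1) j')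
    rw [← h2, hred (j' + 1), hred j, length_seg G ω hred (j + 1) j' (by omega)] at h3
    omega
  intro j j' h
  by_contra hne
  rcases Nat.lt_or_ge j j' with hlt | hge
  · exact aux j j' hlt h
  · exact aux j' j (by omega) h.symm

lemma moved_simpleRoot (g : W) (hg : g ≠ 1) :
    ∃ s₂ : S, 1 ≤ ‖G.ρ g (simpleRoot s₂) - simpleRoot s₂‖ := by
  obtain ⟨t, ht⟩ := G.cs.exists_rightDescent_of_ne_one hg
  rw [CoxeterSystem.isRightDescent_iff] at ht
  refine ⟨t, ?_⟩
  have hasc : G.cs.length ((g * G.cs.simple t) * G.cs.simple t) =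
      G.cs.length (g * G.cs.simple t) + 1 := by
    rw [G.cs.simple_mul_simple_cancel_right]
    omega
  have hr := G.rho_simpleRoot_nonneg hasc
  have happ : G.ρ g (simpleRoot t) = -(G.ρ (g * G.cs.simple t) (simpleRoot t)) := by
    conv_lhs => rw [← G.cs.simple_mul_simple_cancel_right (w := g) t]
    rw [rho_mul_apply, rho_simple_self, map_neg]
  have hcoord : (G.ρ g (simpleRoot t) - simpleRoot t) t ≤ -1 := by
    rw [happ]
    simp only [Pi.sub_apply, Pi.neg_apply]
    have h1 := hr t
    have h2 : simpleRoot t t = 1 := by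
      unfold simpleRoot
      exact Pi.single_eq_same t 1
    linarith
  calc (1 : ℝ) ≤ |(G.ρ g (simpleRoot t) - simpleRoot t) t| := by
        rw [abs_of_nonpos (by linarith)]
        linarith
    _ ≤ ‖G.ρ g (simpleRoot t) - simpleRoot t‖ := by
        simpa using norm_le_pi_norm (G.ρ g (simpleRoot t) - simpleRoot t) t

lemma reflw_pair_ne_one (hred : G.IsInfiniteReducedWord ω) {n₁ n₂ : ℕ} (hnn : n₁ ≠ n₂) :
    reflw G ω n₁ * reflw G ω n₂ ≠ 1 := by
  intro h1
  have hid : ∀ z : Vec S, G.ρ (reflw G ω n₁) (G.ρ (reflw G ω n₂) z) = z := by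
    intro z
    rw [← rho_mul_apply, h1, rho_one_apply]
  have h3 : G.ρ (reflw G ω n₂) (betav G ω n₂) = -(betav G ω n₂) := by
    rw [rho_reflw_apply, B_betav_self]
    module
  have h2 : G.ρ (reflw G ω n₁) (-(betav G ω n₂)) = betav G ω n₂ := by
    rw [← h3]; exact hid _
  rw [map_neg, rho_reflw_apply] at h2
  obtain ⟨c, hcdef⟩ : ∃ c, c = Bform G.k (betav G ω n₂) (betav G ω n₁) := ⟨_, rfl⟩
  rw [← hcdef] at h2
  have h4 : betav G ω n₂ = c • betav G ω n₁ := by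
    have e : (2 * c) • betav G ω n₁ = (2 : ℝ) • betav G ω n₂ := by
      linear_combination (norm := module) h2
    have e2 : (2 : ℝ) • (c • betav G ω n₁) = (2 : ℝ) • betav G ω n₂ := by
      rw [smul_smul]; exact e
    exact (smul_right_injective (Vec S) (two_ne_zero) e2).symm
  have h6 : c * c = 1 := by
    have h7 := B_betav_self G ω n₂
    rw [h4, Bform_smul_left, Bform_smul_right, B_betav_self G ω n₁] at h7
    nlinarith [h7]
  have h8 : (c - 1) * (c + 1) = 0 := by nlinarith
  rcases mul_eq_zero.mp h8 with h | h
  · have hc1 : c = 1 := by linarith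
    rw [hc1, one_smul] at h4
    exact hnn (betav_injective G ω hred h4.symm)
  · have hc1 : c = -1 := by linarith
    rw [hc1] at h4
    have h9 : betav G ω n₂ = 0 := by
      funext i
      have ha := betav_nonneg G ω hred n₂ i
      have hb := betav_nonneg G ω hred n₁ i
      have hc : betav G ω n₂ i = -(betav G ω n₁ i) := by
        rw [h4]
        simp
      simp only [Pi.zero_apply]
      linarith
    exact betav_ne_zero G ω n₂ h9

set_option maxHeartbeats 1600000 in
lemma tendsto_norm_betav (hred : G.IsInfiniteReducedWord ω) :
    Filter.Tendsto (fun n => ‖betav G ω n‖) Filter.atTop Filter.atTop := by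
  by_contra hc
  rw [Filter.tendsto_atTop] at hc
  push_neg at hc
  obtain ⟨R, hR⟩ := hc
  have hfreq : ∃ᶠ n in Filter.atTop, betav G ω n ∈ Metric.closedBall (0 : Vec S) R :=
    hR.mono fun n hn => by
      rw [Metric.mem_closedBall, dist_zero_right]
      exact hn.le
  obtain ⟨βs, hβs, hclus⟩ :=
    exists_mapClusterPt_of_frequently_mem (isCompact_closedBall _ _) hfreq
  have hne : Nonempty S := by
    rcases isEmpty_or_nonempty S with hS | hS
    · exact absurd (funext fun i => (IsEmpty.false i).elim) (betav_ne_zero G ω 0)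
    · exact hS
  obtain ⟨K0, hK0def⟩ : ∃ K0, K0 = kAbs G.k := ⟨_, rfl⟩
  have hK0 : 1 ≤ K0 := by rw [hK0def]; exact one_le_kAbs G.k_diag
  have hK0' : 0 ≤ K0 := by linarith
  have hRb : ‖βs‖ ≤ R := by
    rw [Metric.mem_closedBall, dist_zero_right] at hβs
    exact hβs
  have hR0 : 0 ≤ R := le_trans (norm_nonneg βs) hRb
  obtain ⟨Rb, hRbdef⟩ : ∃ Rb : ℝ, Rb = R + 1 := ⟨_, rfl⟩
  have hRb1 : 1 ≤ Rb := by rw [hRbdef]; linarith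
  obtain ⟨Cb, hCbdef⟩ : ∃ Cb, Cb = (1 + 2 * K0 * Rb ^ 2) * (4 * K0 * Rb) + 1 := ⟨_, rfl⟩
  have hRb0 : (0 : ℝ) ≤ Rb := by linarith
  have haux1 : (0 : ℝ) ≤ 1 + 2 * K0 * Rb ^ 2 := by nlinarith
  have haux2 : (0 : ℝ) ≤ 4 * K0 * Rb := by nlinarith
  have hCb : 1 ≤ Cb := by
    have h0 : 0 ≤ (1 + 2 * K0 * Rb ^ 2) * (4 * K0 * Rb) := mul_nonneg haux1 haux2
    rw [hCbdef]; linarith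
  obtain ⟨ε, hεdef⟩ : ∃ ε : ℝ, ε = min 1 (1 / Cb) := ⟨_, rfl⟩
  have hε : 0 < ε := by
    rw [hεdef]
    exact lt_min one_pos (one_div_pos.mpr (by linarith))
  have hε1 : ε ≤ 1 := by rw [hεdef]; exact min_le_left _ _
  have hεC : ε ≤ 1 / Cb := by rw [hεdef]; exact min_le_right _ _
  have hfr2 : ∃ᶠ n in Filter.atTop, betav G ω n ∈ Metric.ball βs (ε / 2) :=
    mapClusterPt_iff_frequently.mp hclus _ (Metric.ball_mem_nhds _ (by linarith))
  obtain ⟨n₁, hn₁ge, hn₁⟩ := Filter.frequently_atTop.mp hfr2 0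
  obtain ⟨n₂, hn₂ge, hn₂⟩ := Filter.frequently_atTop.mp hfr2 (n₁ + 1)
  have hnn : n₁ ≠ n₂ := by omega
  rw [Metric.mem_ball] at hn₁ hn₂
  have hd : ‖betav G ω n₁ - betav G ω n₂‖ < ε := by
    rw [← dist_eq_norm]
    calc dist (betav G ω n₁) (betav G ω n₂) ≤
        dist (betav G ω n₁) βs + dist βs (betav G ω n₂) := dist_triangle _ _ _
      _ < ε / 2 + ε / 2 := by
          rw [dist_comm βs]
          exact add_lt_add hn₁ hn₂
      _ = ε := by ring
  have hβR : ‖betav G ω n₁‖ ≤ Rb := by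
    have h1 : dist (betav G ω n₁) (0 : Vec S) ≤ dist (betav G ω n₁) βs + dist βs 0 :=
      dist_triangle _ _ _
    rw [dist_zero_right, dist_zero_right] at h1
    rw [hRbdef]
    linarith
  have hβ'R : ‖betav G ω n₂‖ ≤ Rb := by
    have h1 : dist (betav G ω n₂) (0 : Vec S) ≤ dist (betav G ω n₂) βs + dist βs 0 :=
      dist_triangle _ _ _
    rw [dist_zero_right, dist_zero_right] at h1
    rw [hRbdef]
    linarith
  have hg1 : reflw G ω n₁ * reflw G ω n₂ ≠ 1 := reflw_pair_ne_one G ω hred hnn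
  obtain ⟨s₂, hs₂⟩ := moved_simpleRoot G (reflw G ω n₁ * reflw G ω n₂) hg1
  obtain ⟨x, hxdef⟩ : ∃ x : Vec S, x = simpleRoot s₂ := ⟨_, rfl⟩
  rw [← hxdef] at hs₂
  have hx1 : ‖x‖ = 1 := by rw [hxdef]; exact norm_single_one s₂
  obtain ⟨d, hddef⟩ : ∃ d : Vec S, d = (2 * Bform G.k x (betav G ω n₁)) • betav G ω n₁ -
      (2 * Bform G.k x (betav G ω n₂)) • betav G ω n₂ := ⟨_, rfl⟩
  have hstep1 : G.ρ (reflw G ω n₁ * reflw G ω n₂) x - x =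
      d - (2 * Bform G.k d (betav G ω n₁)) • betav G ω n₁ := by
    rw [rho_mul_apply, rho_reflw_apply, rho_reflw_apply]
    have e1 : Bform G.k (x - (2 * Bform G.k x (betav G ω n₂)) • betav G ω n₂) (betav G ω n₁) =
        Bform G.k x (betav G ω n₁) -
          (2 * Bform G.k x (betav G ω n₂)) * Bform G.k (betav G ω n₂) (betav G ω n₁) := by
      rw [Bform_sub_left, Bform_smul_left]
    have e2 : Bform G.k d (betav G ω n₁) =
        2 * Bform G.k x (betav G ω n₁) * Bform G.k (betav G ω n₁) (betav G ω n₁) -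
          2 * Bform G.k x (betav G ω n₂) * Bform G.k (betav G ω n₂) (betav G ω n₁) := by
      rw [hddef, Bform_sub_left, Bform_smul_left, Bform_smul_left]
      try ring
    have e3 : Bform G.k (betav G ω n₁) (betav G ω n₁) = 1 := B_betav_self G ω n₁
    rw [e1, e2, e3, hddef]
    module
  have hBxβ : |Bform G.k x (betav G ω n₁)| ≤ K0 * Rb := by
    have h1 := abs_Bform_le_kAbs G.k x (betav G ω n₁)
    rw [hx1, ← hK0def] at h1
    calc |Bform G.k x (betav G ω n₁)| ≤ K0 * (1 * ‖betav G ω n₁‖) := h1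
      _ ≤ K0 * Rb := by
          rw [one_mul]
          exact mul_le_mul_of_nonneg_left hβR hK0'
  have hBdiff : |Bform G.k x (betav G ω n₁) - Bform G.k x (betav G ω n₂)| ≤ K0 * ε := by
    rw [← Bform_sub_right]
    have h1 := abs_Bform_le_kAbs G.k x (betav G ω n₁ - betav G ω n₂)
    rw [hx1, ← hK0def] at h1
    calc |Bform G.k x (betav G ω n₁ - betav G ω n₂)| ≤
        K0 * (1 * ‖betav G ω n₁ - betav G ω n₂‖) := h1
      _ ≤ K0 * ε := by
          rw [one_mul]
          exact mul_le_mul_of_nonneg_left hd.le hK0'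
  have hdnorm : ‖d‖ ≤ 4 * K0 * Rb * ε := by
    have hdd : d = (2 * Bform G.k x (betav G ω n₁)) • (betav G ω n₁ - betav G ω n₂) +
        (2 * (Bform G.k x (betav G ω n₁) - Bform G.k x (betav G ω n₂))) • betav G ω n₂ := by
      rw [hddef]
      module
    rw [hdd]
    have t0 := norm_add_le
      ((2 * Bform G.k x (betav G ω n₁)) • (betav G ω n₁ - betav G ω n₂))
      ((2 * (Bform G.k x (betav G ω n₁) - Bform G.k x (betav G ω n₂))) • betav G ω n₂)
    rw [norm_smul, norm_smul, Real.norm_eq_abs, Real.norm_eq_abs, abs_mul, abs_mul,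
      abs_two] at t0
    have t1 : 2 * |Bform G.k x (betav G ω n₁)| * ‖betav G ω n₁ - betav G ω n₂‖ ≤
        2 * (K0 * Rb) * ε := by
      have := mul_le_mul (by linarith : 2 * |Bform G.k x (betav G ω n₁)| ≤ 2 * (K0 * Rb))
        hd.le (norm_nonneg _) (by nlinarith)
      linarith
    have t2 : 2 * |Bform G.k x (betav G ω n₁) - Bform G.k x (betav G ω n₂)| *
        ‖betav G ω n₂‖ ≤ 2 * (K0 * ε) * Rb := by
      have := mul_le_mul
        (by linarith : 2 * |Bform G.k x (betav G ω n₁) - Bform G.k x (betav G ω n₂)| ≤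
          2 * (K0 * ε)) hβ'R (norm_nonneg _) (by nlinarith)
      linarith
    nlinarith
  have hBdβ : |Bform G.k d (betav G ω n₁)| ≤ K0 * (‖d‖ * Rb) := by
    have h1 := abs_Bform_le_kAbs G.k d (betav G ω n₁)
    rw [← hK0def] at h1
    calc |Bform G.k d (betav G ω n₁)| ≤ K0 * (‖d‖ * ‖betav G ω n₁‖) := h1
      _ ≤ K0 * (‖d‖ * Rb) := by
          apply mul_le_mul_of_nonneg_left _ hK0'
          exact mul_le_mul_of_nonneg_left hβR (norm_nonneg _)
  have hTd : ‖G.ρ (reflw G ω n₁ * reflw G ω n₂) x - x‖ ≤ (1 + 2 * K0 * Rb ^ 2) * ‖d‖ := by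
    rw [hstep1]
    have t0 := norm_sub_le d ((2 * Bform G.k d (betav G ω n₁)) • betav G ω n₁)
    rw [norm_smul, Real.norm_eq_abs, abs_mul, abs_two] at t0
    have t1 : 2 * |Bform G.k d (betav G ω n₁)| * ‖betav G ω n₁‖ ≤
        2 * (K0 * (‖d‖ * Rb)) * Rb := by
      apply mul_le_mul (by linarith) hβR (norm_nonneg _) (by positivity)
    calc ‖d - (2 * Bform G.k d (betav G ω n₁)) • betav G ω n₁‖ ≤
        ‖d‖ + 2 * (K0 * (‖d‖ * Rb)) * Rb := by linarith
      _ = (1 + 2 * K0 * Rb ^ 2) * ‖d‖ := by ring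
  have hfinal : ‖G.ρ (reflw G ω n₁ * reflw G ω n₂) x - x‖ < 1 := by
    have h1 : ‖G.ρ (reflw G ω n₁ * reflw G ω n₂) x - x‖ ≤
        (1 + 2 * K0 * Rb ^ 2) * (4 * K0 * Rb * ε) := by
      calc ‖G.ρ (reflw G ω n₁ * reflw G ω n₂) x - x‖ ≤ (1 + 2 * K0 * Rb ^ 2) * ‖d‖ := hTd
        _ ≤ (1 + 2 * K0 * Rb ^ 2) * (4 * K0 * Rb * ε) := by
            apply mul_le_mul_of_nonneg_left hdnorm haux1
    have h2 : (1 + 2 * K0 * Rb ^ 2) * (4 * K0 * Rb * ε) = (Cb - 1) * ε := by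
      rw [hCbdef]; ring
    have h3 : (Cb - 1) * ε ≤ (Cb - 1) * (1 / Cb) := by
      apply mul_le_mul_of_nonneg_left hεC (by linarith)
    have h4 : (Cb - 1) * (1 / Cb) < 1 := by
      rw [mul_one_div, div_lt_one (by linarith)]
      linarith
    linarith
  linarith [hs₂, hfinal]

end LorentzianCoxeterSystem

section E3a

set_option linter.unusedSectionVars false

variable {S : Type} [Fintype S] [DecidableEq S]

lemma Bform_sum_right {ι : Type*} (k : S → S → ℝ) (F : Finset ι) (f : ι → Vec S) (x : Vec S) :
    Bform k x (∑ i ∈ F, f i) = ∑ i ∈ F, Bform k x (f i) := by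
  classical
  induction F using Finset.induction with
  | empty => simp [Bform_zero_right]
  | insert _ _ h ih => rw [Finset.sum_insert h, Finset.sum_insert h, Bform_add_right, ih]

lemma Bform_basis_expansion (k : S → S → ℝ)
    (b : Module.Basis (Fin (Fintype.card S)) ℝ (Vec S))
    (hgram : ∀ i j, Bform k (b i) (b j) =
      if i = j then (if (i : ℕ) + 1 = Fintype.card S then -1 else 1) else 0)
    (x y : Vec S) :
    Bform k x y = ∑ i, (b.repr x i) * (b.repr y i) *
      (if (i : ℕ) + 1 = Fintype.card S then -1 else 1) := by
  conv_lhs => rw [← b.sum_repr x, ← b.sum_repr y]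
  rw [Bform_sum_left]
  refine Finset.sum_congr rfl fun i _ => ?_
  rw [Bform_smul_left, Bform_sum_right]
  have h1 : ∀ j, Bform k (b i) (b.repr y j • b j) = b.repr y j * Bform k (b i) (b j) :=
    fun j => Bform_smul_right k _ _ _
  simp_rw [h1, hgram, mul_ite, mul_zero]
  rw [Finset.sum_ite_eq Finset.univ i]
  simp only [Finset.mem_univ, if_true]
  split_ifs <;> ring

/-- Two isotropic vectors in the nonnegative cone which are orthogonal, for a Lorentzian
form, coincide (given unit norms). -/
lemma lorentz_dep (k : S → S → ℝ)
    (hb : ∃ b : Module.Basis (Fin (Fintype.card S)) ℝ (Vec S), ∀ i j,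
      Bform k (b i) (b j) =
        if i = j then (if (i : ℕ) + 1 = Fintype.card S then -1 else 1) else 0)
    {ζ γ : Vec S} (hζ1 : ‖ζ‖ = 1) (hγ1 : ‖γ‖ = 1)
    (hζC : ∀ i, 0 ≤ ζ i) (hγC : ∀ i, 0 ≤ γ i)
    (hζζ : Bform k ζ ζ = 0) (hγγ : Bform k γ γ = 0) (hζγ : Bform k ζ γ = 0) :
    γ = ζ := by
  classical
  obtain ⟨b, hgram⟩ := hb
  have hn1 : 1 ≤ Fintype.card S := by
    by_contra h
    push_neg at h
    have h2 : Fintype.card S = 0 := by omega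
    have h3 : IsEmpty S := Fintype.card_eq_zero_iff.mp h2
    have h4 : ζ = 0 := funext fun i => (h3.false i).elim
    rw [h4, norm_zero] at hζ1
    norm_num at hζ1
  have hlt : Fintype.card S - 1 < Fintype.card S := by omega
  obtain ⟨ilast, hilast⟩ : ∃ i : Fin (Fintype.card S), (i : ℕ) = Fintype.card S - 1 :=
    ⟨⟨Fintype.card S - 1, hlt⟩, rfl⟩
  have hd_last : ((ilast : ℕ) + 1 = Fintype.card S) := by omega
  have hd_other : ∀ i : Fin (Fintype.card S), i ≠ ilast → ¬((i : ℕ) + 1 = Fintype.card S) := by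
    intro i hi h
    apply hi
    apply Fin.ext
    omega
  have hexp : ∀ x y : Vec S, Bform k x y = ∑ i, (b.repr x i) * (b.repr y i) *
      (if (i : ℕ) + 1 = Fintype.card S then -1 else 1) := Bform_basis_expansion k b hgram
  have hsplit : ∀ u v : Fin (Fintype.card S) → ℝ,
      (∑ i, u i * v i * (if (i : ℕ) + 1 = Fintype.card S then -1 else 1)) =
        (∑ i ∈ Finset.univ.erase ilast, u i * v i) - u ilast * v ilast := by
    intro u v
    rw [← Finset.add_sum_erase Finset.univ _ (Finset.mem_univ ilast)]
    rw [if_pos hd_last]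
    have h5 : ∀ i ∈ Finset.univ.erase ilast,
        u i * v i * (if (i : ℕ) + 1 = Fintype.card S then -1 else 1) = u i * v i := by
      intro i hi
      rw [if_neg (hd_other i (Finset.ne_of_mem_erase hi))]
      ring
    rw [Finset.sum_congr rfl h5]
    ring
  have hζζ' : (∑ i ∈ Finset.univ.erase ilast, b.repr ζ i * b.repr ζ i) =
      b.repr ζ ilast * b.repr ζ ilast := by
    have h6 := hexp ζ ζ
    rw [hζζ] at h6
    rw [hsplit] at h6
    linarith
  have hγγ' : (∑ i ∈ Finset.univ.erase ilast, b.repr γ i * b.repr γ i) =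
      b.repr γ ilast * b.repr γ ilast := by
    have h6 := hexp γ γ
    rw [hγγ] at h6
    rw [hsplit] at h6
    linarith
  have hζγ' : (∑ i ∈ Finset.univ.erase ilast, b.repr ζ i * b.repr γ i) =
      b.repr ζ ilast * b.repr γ ilast := by
    have h6 := hexp ζ γ
    rw [hζγ] at h6
    rw [hsplit] at h6
    linarith
  have hkey : ∀ i : Fin (Fintype.card S),
      b.repr γ ilast * b.repr ζ i = b.repr ζ ilast * b.repr γ i := by
    have hsum0 : (∑ i ∈ Finset.univ.erase ilast,
        (b.repr γ ilast * b.repr ζ i - b.repr ζ ilast * b.repr γ i) ^ 2) = 0 := by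
      have hexpand : ∀ i : Fin (Fintype.card S),
          (b.repr γ ilast * b.repr ζ i - b.repr ζ ilast * b.repr γ i) ^ 2 =
          (b.repr γ ilast * b.repr γ ilast) * (b.repr ζ i * b.repr ζ i) -
            2 * (b.repr ζ ilast * b.repr γ ilast) * (b.repr ζ i * b.repr γ i) +
            (b.repr ζ ilast * b.repr ζ ilast) * (b.repr γ i * b.repr γ i) := by
        intro i; ring
      rw [Finset.sum_congr rfl fun i _ => hexpand i]
      rw [Finset.sum_add_distrib, Finset.sum_sub_distrib, ← Finset.mul_sum, ← Finset.mul_sum,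
        ← Finset.mul_sum, hζζ', hγγ', hζγ']
      ring
    have hzero := (Finset.sum_eq_zero_iff_of_nonneg
      (fun i _ => sq_nonneg _)).mp hsum0
    intro i
    by_cases hi : i = ilast
    · rw [hi]; ring
    · have h7 := hzero i (Finset.mem_erase.mpr ⟨hi, Finset.mem_univ i⟩)
      have h8 := sq_eq_zero_iff.mp h7
      linarith
  have hane : b.repr ζ ilast ≠ 0 := by
    intro ha0
    have hf0 : ∀ i : Fin (Fintype.card S), b.repr ζ i = 0 := by
      intro i
      by_cases hi : i = ilast
      · rw [hi]; exact ha0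
      · have hmem := Finset.mem_erase.mpr ⟨hi, Finset.mem_univ i⟩
        have h9 := (Finset.sum_eq_zero_iff_of_nonneg
          (fun j _ => mul_self_nonneg (b.repr ζ j))).mp (by rw [hζζ', ha0]; ring) i hmem
        nlinarith [h9]
    have hz0 : ζ = 0 := by
      have hrepr0 : b.repr ζ = 0 := by
        ext i
        exact hf0 i
      exact b.repr.injective (by rw [hrepr0]; simp)
    rw [hz0, norm_zero] at hζ1
    norm_num at hζ1
  have hγζ : γ = (b.repr γ ilast / b.repr ζ ilast) • ζ := by
    apply b.repr.injective
    rw [map_smul]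
    ext i
    simp only [Finsupp.smul_apply, smul_eq_mul]
    have h10 := hkey i
    field_simp
    linarith
  have hnorm : |b.repr γ ilast / b.repr ζ ilast| = 1 := by
    have h11 := congrArg norm hγζ
    rw [norm_smul, Real.norm_eq_abs, hζ1, hγ1, mul_one] at h11
    exact h11.symm
  rcases (abs_eq (by norm_num : (0:ℝ) ≤ 1)).mp hnorm with h | h
  · rw [hγζ, h, one_smul]
  · exfalso
    rw [h] at hγζ
    have hγ0 : γ = 0 := by
      funext i
      have h1 := hγC i
      have h2 := hζC i
      have h3 : γ i = -ζ i := by rw [hγζ]; simp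
      simp only [Pi.zero_apply]
      linarith
    rw [hγ0, norm_zero] at hγ1
    norm_num at hγ1

end E3a

namespace LorentzianCoxeterSystem

set_option linter.unusedSectionVars false

open Filter Topology

variable {S W : Type} [Fintype S] [DecidableEq S] [Group W] (G : LorentzianCoxeterSystem S W)
variable (ω : ℕ → S)

lemma isClosed_cone : IsClosed {v : Vec S | ∀ i, 0 ≤ v i} := by
  have : {v : Vec S | ∀ i, 0 ≤ v i} = ⋂ i, (fun v : Vec S => v i) ⁻¹' (Set.Ici 0) := by
    ext v; simp [Set.mem_iInter]
  rw [this]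
  exact isClosed_iInter fun i => IsClosed.preimage (continuous_apply i) isClosed_Ici

set_option maxHeartbeats 1600000 in
lemma cluster_unique (hred : G.IsInfiniteReducedWord ω) (x₀ : Vec S)
    (hx₀ : ∀ t, Bform G.k x₀ (Pi.single t 1) = -1) :
    ∃ ζ : Vec S, ‖ζ‖ = 1 ∧
      Tendsto (fun k => ‖yv G ω x₀ k‖⁻¹ • yv G ω x₀ k) atTop (𝓝 ζ) ∧
      Tendsto (fun n => ‖betav G ω n‖⁻¹ • betav G ω n) atTop (𝓝 ζ) := by
  have hyne : ∀ k, yv G ω x₀ k ≠ 0 := yv_ne_zero G ω x₀ hred hx₀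
  have hbne : ∀ n, betav G ω n ≠ 0 := betav_ne_zero G ω
  obtain ⟨z, hzdef⟩ : ∃ z : ℕ → Vec S, z = fun k => ‖yv G ω x₀ k‖⁻¹ • yv G ω x₀ k := ⟨_, rfl⟩
  obtain ⟨bb, hbbdef⟩ : ∃ bb : ℕ → Vec S, bb = fun n => ‖betav G ω n‖⁻¹ • betav G ω n := ⟨_, rfl⟩
  have hznorm : ∀ k, ‖z k‖ = 1 := by
    intro k
    rw [hzdef]
    exact norm_smul_inv_norm (hyne k)
  have hbnorm : ∀ n, ‖bb n‖ = 1 := by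
    intro n
    rw [hbbdef]
    exact norm_smul_inv_norm (hbne n)
  have hzsph : ∀ k, z k ∈ Metric.sphere (0 : Vec S) 1 := by
    intro k; rw [mem_sphere_zero_iff_norm]; exact hznorm k
  have hbsph : ∀ n, bb n ∈ Metric.sphere (0 : Vec S) 1 := by
    intro n; rw [mem_sphere_zero_iff_norm]; exact hbnorm n
  have hyinf : Tendsto (fun k => ‖yv G ω x₀ k‖) atTop atTop := tendsto_norm_yv G ω x₀ hred hx₀
  have hbinf : Tendsto (fun n => ‖betav G ω n‖) atTop atTop := tendsto_norm_betav G ω hred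
  have hyinv : Tendsto (fun k => ‖yv G ω x₀ k‖⁻¹) atTop (𝓝 0) := hyinf.inv_tendsto_atTop
  have hbinv : Tendsto (fun n => ‖betav G ω n‖⁻¹) atTop (𝓝 0) := hbinf.inv_tendsto_atTop
  -- The main claim : any cluster of `z` equals any cluster of `bb`.
  have hclaim : ∀ ζ γ : Vec S, MapClusterPt ζ atTop z → MapClusterPt γ atTop bb → γ = ζ := by
    intro ζ γ hζ hγ
    -- norms
    have hζ1 : ‖ζ‖ = 1 := by
      have h1 : MapClusterPt ‖ζ‖ atTop (fun k => ‖z k‖) := hζ.comp_cont continuous_norm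
      have h2 : Tendsto (fun k => ‖z k‖) atTop (𝓝 1) :=
        tendsto_const_nhds.congr fun k => (hznorm k).symm
      exact h1.eq_of_tendsto h2
    have hγ1 : ‖γ‖ = 1 := by
      have h1 : MapClusterPt ‖γ‖ atTop (fun n => ‖bb n‖) := hγ.comp_cont continuous_norm
      have h2 : Tendsto (fun n => ‖bb n‖) atTop (𝓝 1) :=
        tendsto_const_nhds.congr fun n => (hbnorm n).symm
      exact h1.eq_of_tendsto h2
    -- cones
    have hγC : ∀ i, 0 ≤ γ i := by
      intro i
      have h1 : γ ∈ {v : Vec S | ∀ i, 0 ≤ v i} := by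
        refine hγ.mem_of_eventually isClosed_cone (Eventually.of_forall fun n => ?_)
        intro j
        rw [hbbdef]
        simp only [Pi.smul_apply, smul_eq_mul]
        exact mul_nonneg (by positivity) (betav_nonneg G ω hred n j)
      exact h1 i
    have hζC : ∀ i, 0 ≤ ζ i := by
      intro i
      have hzz : MapClusterPt ζ atTop (fun k => z k - ‖yv G ω x₀ k‖⁻¹ • x₀) := by
        refine hζ.congr_dist ?_
        have h2 : ∀ k, dist (z k) (z k - ‖yv G ω x₀ k‖⁻¹ • x₀) = ‖yv G ω x₀ k‖⁻¹ * ‖x₀‖ := by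
          intro k
          rw [dist_eq_norm]
          have h3 : z k - (z k - ‖yv G ω x₀ k‖⁻¹ • x₀) = ‖yv G ω x₀ k‖⁻¹ • x₀ := by abel
          rw [h3, norm_smul, Real.norm_eq_abs, abs_of_nonneg (by positivity)]
        have h4 : Tendsto (fun k => ‖yv G ω x₀ k‖⁻¹ * ‖x₀‖) atTop (𝓝 0) := by
          have := hyinv.mul_const ‖x₀‖
          simpa using this
        exact h4.congr fun k => (h2 k).symm
      have h1 : ζ ∈ {v : Vec S | ∀ i, 0 ≤ v i} := by
        refine hzz.mem_of_eventually isClosed_cone (Eventually.of_forall fun k => ?_)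
        intro j
        rw [hzdef]
        simp only [Pi.sub_apply, Pi.smul_apply, smul_eq_mul]
        have h5 := yv_coord_ge G ω x₀ hred hx₀ k j
        have h6 : (0:ℝ) ≤ ‖yv G ω x₀ k‖⁻¹ := by positivity
        nlinarith
      exact h1 i
    -- isotropy
    have hζζ : Bform G.k ζ ζ = 0 := by
      have h1 : MapClusterPt (Bform G.k ζ ζ) atTop (fun k => Bform G.k (z k) (z k)) :=
        hζ.comp_cont (continuous_Bform_diag G.k)
      have h2 : Tendsto (fun k => Bform G.k (z k) (z k)) atTop (𝓝 0) := by
        have h3 : ∀ k, Bform G.k (z k) (z k) =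
            ‖yv G ω x₀ k‖⁻¹ * (‖yv G ω x₀ k‖⁻¹ * Bform G.k x₀ x₀) := by
          intro k
          rw [hzdef]
          simp only
          rw [Bform_smul_left, Bform_smul_right]
          unfold yv
          rw [G.ρ_preserves]
        have h4 : Tendsto (fun k => ‖yv G ω x₀ k‖⁻¹ * (‖yv G ω x₀ k‖⁻¹ * Bform G.k x₀ x₀))
            atTop (𝓝 (0 * (0 * Bform G.k x₀ x₀))) := hyinv.mul (hyinv.mul_const _)
        rw [show (0 : ℝ) * (0 * Bform G.k x₀ x₀) = 0 by ring] at h4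
        exact h4.congr fun k => (h3 k).symm
      exact h1.eq_of_tendsto h2
    have hγγ : Bform G.k γ γ = 0 := by
      have h1 : MapClusterPt (Bform G.k γ γ) atTop (fun n => Bform G.k (bb n) (bb n)) :=
        hγ.comp_cont (continuous_Bform_diag G.k)
      have h2 : Tendsto (fun n => Bform G.k (bb n) (bb n)) atTop (𝓝 0) := by
        have h3 : ∀ n, Bform G.k (bb n) (bb n) = ‖betav G ω n‖⁻¹ * (‖betav G ω n‖⁻¹ * 1) := by
          intro n
          rw [hbbdef]
          simp only
          rw [Bform_smul_left, Bform_smul_right, B_betav_self]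
        have h4 : Tendsto (fun n => ‖betav G ω n‖⁻¹ * (‖betav G ω n‖⁻¹ * 1)) atTop
            (𝓝 (0 * (0 * 1))) := hbinv.mul (hbinv.mul_const _)
        rw [show (0 : ℝ) * (0 * 1) = 0 by ring] at h4
        exact h4.congr fun n => (h3 n).symm
      exact h1.eq_of_tendsto h2
    -- orthogonality
    have hζb : ∀ j, 0 ≤ Bform G.k ζ (betav G ω j) := by
      intro j
      have h1 : MapClusterPt (Bform G.k ζ (betav G ω j)) atTop
          (fun k => Bform G.k (z k) (betav G ω j)) :=
        hζ.comp_cont (continuous_Bform_left G.k (betav G ω j))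
      refine h1.mem_of_eventually isClosed_Ici ?_
      rw [eventually_atTop]
      refine ⟨j + 1, fun k hk => ?_⟩
      show (0:ℝ) ≤ _
      rw [hzdef]
      simp only
      rw [Bform_smul_left]
      have h2 := B_yv_betav_pos G ω x₀ hred hx₀ (show j < k by omega)
      positivity
    have hζγ1 : 0 ≤ Bform G.k ζ γ := by
      have h1 : MapClusterPt (Bform G.k ζ γ) atTop (fun j => Bform G.k ζ (bb j)) :=
        hγ.comp_cont (continuous_Bform_right G.k ζ)
      refine h1.mem_of_eventually isClosed_Ici (Eventually.of_forall fun j => ?_)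
      show (0:ℝ) ≤ _
      rw [hbbdef]
      simp only
      rw [Bform_smul_right]
      have h2 := hζb j
      positivity
    have hζγ2 : Bform G.k ζ γ ≤ 0 := by
      have hkγ : ∀ k, Bform G.k (z k) γ ≤ 0 := by
        intro k
        have h1 : MapClusterPt (Bform G.k (z k) γ) atTop (fun j => Bform G.k (z k) (bb j)) :=
          hγ.comp_cont (continuous_Bform_right G.k (z k))
        refine h1.mem_of_eventually isClosed_Iic ?_
        rw [eventually_atTop]
        refine ⟨k, fun j hj => ?_⟩
        show _ ≤ (0:ℝ)
        rw [hzdef, hbbdef]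
        simp only
        rw [Bform_smul_left, Bform_smul_right]
        have h2 := B_yv_betav_neg G ω x₀ hred hx₀ hj
        have h3 : (0:ℝ) ≤ ‖yv G ω x₀ k‖⁻¹ := by positivity
        have h4 : (0:ℝ) ≤ ‖betav G ω j‖⁻¹ := by positivity
        have h5 : Bform G.k (yv G ω x₀ k) (betav G ω j) ≤ 0 := by
          have h6 : 0 ≤ Real.sqrt (1 / kAbs G.k) := Real.sqrt_nonneg _
          linarith
        have h7 : ‖betav G ω j‖⁻¹ * Bform G.k (yv G ω x₀ k) (betav G ω j) ≤ 0 :=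
          mul_nonpos_of_nonneg_of_nonpos h4 h5
        exact mul_nonpos_of_nonneg_of_nonpos h3 h7
      have h1 : MapClusterPt (Bform G.k ζ γ) atTop (fun k => Bform G.k (z k) γ) :=
        hζ.comp_cont (continuous_Bform_left G.k γ)
      exact h1.mem_of_eventually isClosed_Iic (Eventually.of_forall hkγ)
    have hζγ : Bform G.k ζ γ = 0 := le_antisymm hζγ2 hζγ1
    exact lorentz_dep G.k G.lorentzian hζ1 hγ1 hζC hγC hζζ hγγ hζγ
  obtain ⟨ζ0, hζ0sph, hζ0⟩ :=
    exists_mapClusterPt_of_mem (isCompact_sphere (0 : Vec S) 1) hzsph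
  obtain ⟨γ0, hγ0sph, hγ0⟩ :=
    exists_mapClusterPt_of_mem (isCompact_sphere (0 : Vec S) 1) hbsph
  have hζ0eq : γ0 = ζ0 := hclaim ζ0 γ0 hζ0 hγ0
  have hz_tendsto : Tendsto z atTop (𝓝 ζ0) := by
    refine tendsto_of_unique_mapClusterPt (isCompact_sphere (0 : Vec S) 1) hzsph fun c hc => ?_
    have := hclaim c γ0 hc hγ0
    rw [← this, ← hζ0eq]
  have hb_tendsto : Tendsto bb atTop (𝓝 ζ0) := by
    refine tendsto_of_unique_mapClusterPt (isCompact_sphere (0 : Vec S) 1) hbsph fun c hc => ?_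
    exact hclaim ζ0 c hζ0 hc
  refine ⟨ζ0, mem_sphere_zero_iff_norm.mp hζ0sph, ?_, ?_⟩
  · rw [← hzdef]; exact hz_tendsto
  · rw [← hbbdef]; exact hb_tendsto

end LorentzianCoxeterSystem

section FinalHelpers

open Filter Topology

lemma accum_pt_eq_limit {X : Type*} [TopologicalSpace X] [T2Space X] {Y : Set X} {u : ℕ → X}
    {p q : X} (hp : IsAccumPt p Y) (hY : ∀ y ∈ Y, ∃ n, y = u n)
    (hu : Tendsto u atTop (𝓝 q)) : p = q := by
  by_contra hne
  obtain ⟨U, V, hU, hV, hpU, hqV, hUV⟩ := t2_separation hne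
  obtain ⟨N, hN⟩ := eventually_atTop.mp (hu.eventually (hV.mem_nhds hqV))
  have hFfin : (u '' {n | n < N}).Finite := Set.Finite.image _ (Set.finite_Iio N)
  have hU' : IsOpen (U \ ((u '' {n | n < N}) \ {p})) :=
    hU.sdiff ((hFfin.subset Set.diff_subset).isClosed)
  have hpU' : p ∈ U \ ((u '' {n | n < N}) \ {p}) := ⟨hpU, fun hc => hc.2 rfl⟩
  obtain ⟨y, hyY, hyU', hyp⟩ := hp _ (hU'.mem_nhds hpU')
  obtain ⟨n, rfl⟩ := hY y hyY
  rcases Nat.lt_or_ge n N with hn | hn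
  · exact hyU'.2 ⟨Set.mem_image_of_mem _ hn, hyp⟩
  · exact Set.disjoint_left.mp hUV hyU'.1 (hN n hn)

variable {S : Type} [Fintype S]

lemma mk_smul_norm_inv {v : Vec S} (hv : v ≠ 0) :
    Projectivization.mk ℝ v hv = Projectivization.mk ℝ (‖v‖⁻¹ • v)
      (smul_ne_zero (inv_ne_zero (norm_ne_zero_iff.mpr hv)) hv) := by
  rw [Projectivization.mk_eq_mk_iff]
  refine ⟨Units.mk0 ‖v‖ (norm_ne_zero_iff.mpr hv), ?_⟩
  rw [Units.smul_def]
  show ‖v‖ • (‖v‖⁻¹ • v) = v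
  rw [smul_smul, mul_inv_cancel₀ (norm_ne_zero_iff.mpr hv), one_smul]

lemma tendsto_pmk {u : ℕ → Vec S} {ζ : Vec S} (hu : ∀ n, u n ≠ 0) (hζ : ζ ≠ 0)
    (h : Tendsto u atTop (𝓝 ζ)) :
    Tendsto (fun n => Projectivization.mk ℝ (u n) (hu n)) atTop
      (𝓝 (Projectivization.mk ℝ ζ hζ)) := by
  have h1 : Tendsto (fun n => (⟨u n, hu n⟩ : {v : Vec S // v ≠ 0})) atTop
      (𝓝 (⟨ζ, hζ⟩ : {v : Vec S // v ≠ 0})) := tendsto_subtype_rng.mpr h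
  exact ((continuous_pmk).tendsto _).comp h1

end FinalHelpers

open LorentzianCoxeterSystem Filter

variable {S W : Type} [Fintype S] [DecidableEq S] [Group W]

/-- The accumulation point of the projective inversion set of an infinite reduced word arises
as a limit direction through the sequence of prefixes. -/
theorem accumPt_arises_through_prefixes (G : LorentzianCoxeterSystem S W)
    (ω : ℕ → S) (hred : G.IsInfiniteReducedWord ω)
    (p : ℙ ℝ (Vec S)) (hp : IsAccumPt p (G.projInvSet ω)) :
    ∃ p₀ : ℙ ℝ (Vec S),
      Function.Injective (fun k => G.pact (G.prefixProd ω k) p₀) ∧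
      Tendsto (fun k => G.pact (G.prefixProd ω k) p₀) atTop (nhds p) := by
  classical
  rcases isEmpty_or_nonempty S with hS | hS
  · exact absurd (funext fun i => (hS.elim i)) p.rep_nonzero
  obtain ⟨x₀, hx₀⟩ := exists_base_point G.k G.lorentzian
  have hx₀ne : x₀ ≠ 0 := by
    intro h
    have h1 := hx₀ (Classical.arbitrary S)
    rw [h, Bform_zero_left] at h1
    norm_num at h1
  have hyne : ∀ k, yv G ω x₀ k ≠ 0 := yv_ne_zero G ω x₀ hred hx₀
  have hbne : ∀ n, betav G ω n ≠ 0 := betav_ne_zero G ω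
  obtain ⟨ζ, hζ1, hzlim, hblim⟩ := cluster_unique G ω hred x₀ hx₀
  have hζne : ζ ≠ 0 := by
    intro h
    rw [h, norm_zero] at hζ1
    norm_num at hζ1
  have hc0 : 0 < Real.sqrt (1 / kAbs G.k) := c0_pos (S := S) G.k_diag
  have hpact : ∀ k, G.pact (G.prefixProd ω k) (Projectivization.mk ℝ x₀ hx₀ne) =
      Projectivization.mk ℝ (yv G ω x₀ k) (hyne k) := by
    intro k
    unfold LorentzianCoxeterSystem.pact
    rw [Projectivization.map_mk]
    rfl
  refine ⟨Projectivization.mk ℝ x₀ hx₀ne, ?_, ?_⟩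
  · -- injectivity
    have key : ∀ a c : ℕ, c < a →
        Projectivization.mk ℝ (yv G ω x₀ a) (hyne a) ≠
          Projectivization.mk ℝ (yv G ω x₀ c) (hyne c) := by
      intro a c hca heq
      rw [Projectivization.mk_eq_mk_iff] at heq
      obtain ⟨t, ht⟩ := heq
      have hBa := B_yv_betav_neg G ω x₀ hred hx₀ (le_refl a)
      have hBc := B_yv_betav_neg G ω x₀ hred hx₀ (le_of_lt hca)
      have hPa := B_yv_betav_pos G ω x₀ hred hx₀ hca
      have hPc := B_yv_betav_neg G ω x₀ hred hx₀ (le_refl c)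
      have e1 : Bform G.k (yv G ω x₀ a) (betav G ω a) =
          (t : ℝ) * Bform G.k (yv G ω x₀ c) (betav G ω a) := by
        rw [← ht, Units.smul_def, Bform_smul_left]
      have e2 : Bform G.k (yv G ω x₀ a) (betav G ω c) =
          (t : ℝ) * Bform G.k (yv G ω x₀ c) (betav G ω c) := by
        rw [← ht, Units.smul_def, Bform_smul_left]
      have ht1 : (0 : ℝ) < t := by nlinarith
      have ht2 : (t : ℝ) < 0 := by nlinarith
      linarith
    intro a c hac
    simp only [hpact] at hac
    by_contra hne
    rcases lt_trichotomy a c with h | h | h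
    · exact key c a h hac.symm
    · exact hne h
    · exact key a c h hac
  · -- convergence
    have hmkyz : ∀ k, Projectivization.mk ℝ (yv G ω x₀ k) (hyne k) =
        Projectivization.mk ℝ (‖yv G ω x₀ k‖⁻¹ • yv G ω x₀ k)
          (smul_ne_zero (inv_ne_zero (norm_ne_zero_iff.mpr (hyne k))) (hyne k)) :=
      fun k => mk_smul_norm_inv (hyne k)
    have hmkbb : ∀ n, Projectivization.mk ℝ (betav G ω n) (hbne n) =
        Projectivization.mk ℝ (‖betav G ω n‖⁻¹ • betav G ω n)
          (smul_ne_zero (inv_ne_zero (norm_ne_zero_iff.mpr (hbne n))) (hbne n)) :=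
      fun n => mk_smul_norm_inv (hbne n)
    have htz : Tendsto (fun k => Projectivization.mk ℝ (yv G ω x₀ k) (hyne k)) atTop
        (nhds (Projectivization.mk ℝ ζ hζne)) := by
      have := tendsto_pmk (u := fun k => ‖yv G ω x₀ k‖⁻¹ • yv G ω x₀ k)
        (fun k => smul_ne_zero (inv_ne_zero (norm_ne_zero_iff.mpr (hyne k))) (hyne k))
        hζne hzlim
      exact this.congr fun k => (hmkyz k).symm
    have htb : Tendsto (fun n => Projectivization.mk ℝ (betav G ω n) (hbne n)) atTop
        (nhds (Projectivization.mk ℝ ζ hζne)) := by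
      have := tendsto_pmk (u := fun n => ‖betav G ω n‖⁻¹ • betav G ω n)
        (fun n => smul_ne_zero (inv_ne_zero (norm_ne_zero_iff.mpr (hbne n))) (hbne n))
        hζne hblim
      exact this.congr fun n => (hmkbb n).symm
    have hpq : p = Projectivization.mk ℝ ζ hζne := by
      refine accum_pt_eq_limit hp ?_ htb
      rintro y ⟨v, hv, ⟨n, rfl⟩, rfl⟩
      exact ⟨n, rfl⟩
    rw [hpq]
    exact htz.congr fun k => (hpact k).symm
end
end

section
/- Let w ∈ W be a hyperbolic element of a Lorentzian Coxeter system (W,S)_B: suppose λ ∈ ℝ with λ > 1 and x, y ∈ V are nonzero vectors with ρ(w)x = λx and ρ(w)y = λ⁻¹y. Then every nonzero z ∈ V with 𝓑(z,x) = 𝓑(z,y) = 0 gives a limit direction: z̄ ∈ E_V. -/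
open Projectivization Filter Topology TensorProduct
open scoped LinearAlgebra.Projectivization

noncomputable section

open LorentzianCoxeterSystem Filter

variable {S W : Type} [Fintype S] [DecidableEq S] [Group W]

section HyperbolicAux

/-- `Bform` as a bilinear map. -/
def BfAux {S : Type} [Fintype S] (k : S → S → ℝ) : Vec S →ₗ[ℝ] Vec S →ₗ[ℝ] ℝ :=
  LinearMap.mk₂ ℝ (Bform k)
    (fun m₁ m₂ n => by
      simp only [Bform, Pi.add_apply, ← Finset.sum_add_distrib]
      exact Finset.sum_congr rfl fun s _ => Finset.sum_congr rfl fun t _ => by ring)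
    (fun c m n => by
      simp only [Bform, Pi.smul_apply, smul_eq_mul, Finset.mul_sum]
      exact Finset.sum_congr rfl fun s _ => Finset.sum_congr rfl fun t _ => by ring)
    (fun m n₁ n₂ => by
      simp only [Bform, Pi.add_apply, ← Finset.sum_add_distrib]
      exact Finset.sum_congr rfl fun s _ => Finset.sum_congr rfl fun t _ => by ring)
    (fun c m n => by
      simp only [Bform, Pi.smul_apply, smul_eq_mul, Finset.mul_sum]
      exact Finset.sum_congr rfl fun s _ => Finset.sum_congr rfl fun t _ => by ring)

lemma BfAux_apply {S : Type} [Fintype S] (k : S → S → ℝ) (u v : Vec S) :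
    BfAux k u v = Bform k u v := rfl

lemma Bform_comm {S : Type} [Fintype S] (k : S → S → ℝ) (hk : ∀ s t, k s t = k t s)
    (u v : Vec S) : Bform k u v = Bform k v u := by
  unfold Bform
  rw [Finset.sum_comm]
  exact Finset.sum_congr rfl fun t _ => Finset.sum_congr rfl fun s _ => by rw [hk s t]; ring

/-- Positivity of the Lorentzian form on the hyperplane where the last coordinate vanishes. -/
lemma posPart {S : Type} [Fintype S] {n : ℕ} (k : S → S → ℝ) (b : Module.Basis (Fin n) ℝ (Vec S))
    (hb : ∀ i j, Bform k (b i) (b j) =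
      if i = j then (if (i : ℕ) + 1 = n then -1 else 1) else 0)
    (v : Vec S) (hv : v ≠ 0) (h0 : ∀ i : Fin n, (i : ℕ) + 1 = n → b.repr v i = 0) :
    0 < Bform k v v := by
  have hrep : ∀ u : Vec S, Bform k u v = ∑ j, b.repr v j * Bform k u (b j) := by
    intro u
    conv_lhs => rw [← BfAux_apply, ← b.sum_repr v]
    rw [map_sum]
    simp only [map_smul, smul_eq_mul, BfAux_apply]
  have hrep2 : ∀ j, Bform k v (b j) = ∑ i, b.repr v i * Bform k (b i) (b j) := by
    intro j
    conv_lhs => rw [← BfAux_apply, ← b.sum_repr v]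
    rw [map_sum, LinearMap.sum_apply]
    simp only [map_smul, LinearMap.smul_apply, smul_eq_mul, BfAux_apply]
  have key : Bform k v v
      = ∑ j, b.repr v j * (b.repr v j * (if (j : ℕ) + 1 = n then -1 else 1)) := by
    rw [hrep v]
    refine Finset.sum_congr rfl fun j _ => ?_
    rw [hrep2 j]
    simp only [hb, mul_ite, mul_zero, Finset.sum_ite_eq', Finset.mem_univ, if_true]
  rw [key]
  have hterm : ∀ j : Fin n,
      0 ≤ b.repr v j * (b.repr v j * (if (j : ℕ) + 1 = n then -1 else 1)) := by
    intro j
    by_cases hj : (j : ℕ) + 1 = n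
    · rw [h0 j hj]; simp
    · rw [if_neg hj, mul_one]; exact mul_self_nonneg _
  obtain ⟨j, hj⟩ : ∃ j, b.repr v j ≠ 0 := by
    by_contra h
    push_neg at h
    exact hv (b.repr.map_eq_zero_iff.mp (Finsupp.ext h))
  have hjn : ¬((j : ℕ) + 1 = n) := fun hc => hj (h0 j hc)
  refine Finset.sum_pos' (fun i _ => hterm i) ⟨j, Finset.mem_univ j, ?_⟩
  rw [if_neg hjn, mul_one]
  exact mul_self_pos.mpr hj

/-- There is no 2-plane on which the Lorentzian form is nonpositive. -/
lemma noNonposPlane {S : Type} [Fintype S] {n : ℕ} (k : S → S → ℝ)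
    (b : Module.Basis (Fin n) ℝ (Vec S))
    (hb : ∀ i j, Bform k (b i) (b j) =
      if i = j then (if (i : ℕ) + 1 = n then -1 else 1) else 0)
    (u v : Vec S)
    (hind : ∀ a c : ℝ, a • u + c • v = 0 → a = 0 ∧ c = 0)
    (hle : ∀ a c : ℝ, Bform k (a • u + c • v) (a • u + c • v) ≤ 0) : False := by
  have hu0 : u ≠ 0 := by
    intro h
    exact one_ne_zero (hind 1 0 (by simp [h])).1
  rcases n with _ | n'
  · refine hu0 ?_
    have h1 := b.sum_repr u
    simpa using h1.symm
  · have hlast : ∀ i : Fin (n' + 1), (i : ℕ) + 1 = n' + 1 → i = ⟨n', n'.lt_succ_self⟩ := by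
      intro i hi
      exact Fin.ext (show (i : ℕ) = n' by omega)
    set α := b.repr u ⟨n', n'.lt_succ_self⟩ with hα
    set β := b.repr v ⟨n', n'.lt_succ_self⟩ with hβ
    by_cases hd : β • u + (-α) • v = 0
    · obtain ⟨hβ0, hα0⟩ := hind _ _ hd
      have hα0' : α = 0 := by linarith [neg_eq_zero.mp hα0]
      have hpos := posPart k b hb u hu0 (fun i hi => by rw [hlast i hi, ← hα, hα0'])
      have hle' := hle 1 0
      rw [one_smul, zero_smul, add_zero] at hle'
      linarith
    · have hrepr0 : ∀ i : Fin (n' + 1), (i : ℕ) + 1 = n' + 1 →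
          b.repr (β • u + (-α) • v) i = 0 := by
        intro i hi
        rw [hlast i hi, map_add, map_smul, map_smul]
        simp only [Finsupp.coe_add, Finsupp.coe_smul, Pi.add_apply, Pi.smul_apply,
          smul_eq_mul, ← hα, ← hβ]
        ring
      have hpos := posPart k b hb _ hd hrepr0
      have hle' := hle β (-α)
      linarith

end HyperbolicAux

set_option maxHeartbeats 1000000 in
/-- For a hyperbolic element `w` with eigenvectors `x, y` for eigenvalues `λ > 1` and `λ⁻¹`,
every nonzero `z` orthogonal to `x` and `y` gives a limit direction. -/
theorem hyperbolic_unimodular_eigendirection_isLimitDirection (G : LorentzianCoxeterSystem S W)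
    (w : W) (l : ℝ) (hl : 1 < l) (x y : Vec S) (hx : x ≠ 0) (hy : y ≠ 0)
    (heigx : G.ρ w x = l • x) (heigy : G.ρ w y = l⁻¹ • y)
    (z : Vec S) (hz : z ≠ 0) (hzx : Bform G.k z x = 0) (hzy : Bform G.k z y = 0) :
    Projectivization.mk ℝ z hz ∈ G.limitDirections := by
  classical
  obtain ⟨b, hb⟩ := G.lorentzian
  set K := G.k with hK
  have hBsymm : ∀ u v : Vec S, Bform K u v = Bform K v u :=
    fun u v => Bform_comm K G.k_symm u v
  -- basic bilinearity facts
  have haddl : ∀ p q t : Vec S, Bform K (p + q) t = Bform K p t + Bform K q t := by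
    intro p q t
    simp only [← BfAux_apply, map_add, LinearMap.add_apply]
  have hsmull : ∀ (c : ℝ) (p t : Vec S), Bform K (c • p) t = c * Bform K p t := by
    intro c p t
    simp only [← BfAux_apply, map_smul, LinearMap.smul_apply, smul_eq_mul]
  have hsmulr : ∀ (c : ℝ) (p t : Vec S), Bform K t (c • p) = c * Bform K t p := by
    intro c p t
    simp only [← BfAux_apply, map_smul, smul_eq_mul]
  have hB0 : ∀ t : Vec S, Bform K 0 t = 0 := by
    intro t
    simp only [← BfAux_apply, map_zero, LinearMap.zero_apply]
  have hexp : ∀ (a c : ℝ) (u v : Vec S),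
      Bform K (a • u + c • v) (a • u + c • v) =
        a * a * Bform K u u + a * c * Bform K u v + a * c * Bform K v u
          + c * c * Bform K v v := by
    intro a c u v
    simp only [← BfAux_apply, map_add, map_smul, LinearMap.add_apply, LinearMap.smul_apply,
      smul_eq_mul]
    ring
  have hl0 : (0 : ℝ) < l := lt_trans one_pos hl
  have hlinv : (0 : ℝ) < l⁻¹ := inv_pos.mpr hl0
  have hlinv1 : l⁻¹ < 1 := inv_lt_one_of_one_lt₀ hl
  -- powers act on eigenvectors
  have hmulapp : ∀ (a b' : W) (u : Vec S), G.ρ (a * b') u = G.ρ a (G.ρ b' u) := by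
    intro a b' u
    rw [map_mul]
    rfl
  have hpowx : ∀ n : ℕ, G.ρ (w ^ n) x = (l ^ n) • x := by
    intro n
    induction n with
    | zero => rw [pow_zero, map_one, pow_zero, one_smul]; rfl
    | succ n ih =>
        rw [pow_succ, hmulapp, heigx, map_smul, ih, smul_smul, pow_succ, mul_comm]
  have hpowy : ∀ n : ℕ, G.ρ (w ^ n) y = (l⁻¹ ^ n) • y := by
    intro n
    induction n with
    | zero => rw [pow_zero, map_one, pow_zero, one_smul]; rfl
    | succ n ih =>
        rw [pow_succ, hmulapp, heigy, map_smul, ih, smul_smul, pow_succ, mul_comm]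
  -- isotropy of the eigenvectors
  have hxx : Bform K x x = 0 := by
    have h1 := G.ρ_preserves w x x
    rw [← hK, heigx, hsmull, hsmulr] at h1
    have h2 : (l * l - 1) * Bform K x x = 0 := by linear_combination h1
    rcases mul_eq_zero.mp h2 with h | h
    · nlinarith
    · exact h
  have hyy : Bform K y y = 0 := by
    have h1 := G.ρ_preserves w y y
    rw [← hK, heigy, hsmull, hsmulr] at h1
    have h2 : (l⁻¹ * l⁻¹ - 1) * Bform K y y = 0 := by linear_combination h1
    rcases mul_eq_zero.mp h2 with h | h
    · nlinarith
    · exact h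
  -- linear independence of x and y
  have hllinv : l - l⁻¹ ≠ 0 := by nlinarith
  have hindxy : ∀ a c : ℝ, a • x + c • y = 0 → a = 0 ∧ c = 0 := by
    intro a c h
    have h2 : a • (G.ρ w x) + c • (G.ρ w y) = 0 := by
      rw [← map_smul, ← map_smul, ← map_add, h, map_zero]
    rw [heigx, heigy, smul_smul, smul_smul] at h2
    have hy' : c • y = -(a • x) := eq_neg_of_add_eq_zero_right h
    have h6 : (c * l⁻¹) • y = l⁻¹ • (c • y) := by rw [smul_smul, mul_comm]
    rw [h6, hy', smul_neg, smul_smul] at h2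
    have h7 : (a * l - l⁻¹ * a) • x = 0 := by
      rw [sub_smul, sub_eq_add_neg]
      exact h2
    have ha : a = 0 := by
      by_contra hc
      have h8 : a * l - l⁻¹ * a ≠ 0 := by
        intro h9
        apply hllinv
        have : a * (l - l⁻¹) = 0 := by linarith [h9]
        rcases mul_eq_zero.mp this with h | h
        · exact absurd h hc
        · exact h
      exact hx (by simpa [smul_eq_zero, h8] using h7)
    refine ⟨ha, ?_⟩
    rw [ha, zero_smul, zero_add] at h
    rcases smul_eq_zero.mp h with h | h
    · exact h
    · exact absurd h hy
  -- B(x, y) ≠ 0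
  have hxyne : Bform K x y ≠ 0 := by
    intro h0
    have hyx : Bform K y x = 0 := (hBsymm y x).trans h0
    refine noNonposPlane K b hb x y hindxy ?_
    intro a c
    rw [hexp, hxx, hyy, h0, hyx]
    ring_nf
    exact le_refl 0
  have hyxne : Bform K y x ≠ 0 := fun h => hxyne ((hBsymm x y).trans h)
  -- positive definiteness on the orthogonal complement of x and y
  have hUpos : ∀ v : Vec S, Bform K v x = 0 → Bform K v y = 0 → v ≠ 0 →
      0 < Bform K v v := by
    intro v hvx hvy hv0
    by_contra hcon
    push_neg at hcon
    refine noNonposPlane K b hb v x ?_ ?_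
    · intro a c h
      have h1 : Bform K (a • v + c • x) y = 0 := by rw [h, hB0]
      rw [haddl, hsmull, hsmull, hvy] at h1
      have hc0 : c = 0 := by
        rcases mul_eq_zero.mp (by linarith [h1] : c * Bform K x y = 0) with h' | h'
        · exact h'
        · exact absurd h' hxyne
      refine ⟨?_, hc0⟩
      rw [hc0, zero_smul, add_zero] at h
      rcases smul_eq_zero.mp h with h' | h'
      · exact h'
      · exact absurd h' hv0
    · intro a c
      have hxv : Bform K x v = 0 := (hBsymm x v).trans hvx
      rw [hexp, hvx, hxx, hxv]
      nlinarith [mul_self_nonneg a]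
  have hBzz : 0 < Bform K z z := hUpos z hzx hzy hz
  -- invariance of the orthogonal complement
  have hUinv : ∀ (n : ℕ) (v : Vec S), Bform K v x = 0 → Bform K v y = 0 →
      Bform K (G.ρ (w ^ n) v) x = 0 ∧ Bform K (G.ρ (w ^ n) v) y = 0 := by
    intro n v hvx hvy
    constructor
    · have h1 := G.ρ_preserves (w ^ n) v x
      rw [hpowx n, hsmulr, hvx] at h1
      have hln : (l : ℝ) ^ n ≠ 0 := by positivity
      rcases mul_eq_zero.mp h1 with h | h
      · exact absurd h hln
      · exact h
    · have h1 := G.ρ_preserves (w ^ n) v y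
      rw [hpowy n, hsmulr, hvy] at h1
      have hln : (l⁻¹ : ℝ) ^ n ≠ 0 := by positivity
      rcases mul_eq_zero.mp h1 with h | h
      · exact absurd h hln
      · exact h
  -- the orthogonal complement as a submodule
  set Usub : Submodule ℝ (Vec S) :=
    LinearMap.ker ((BfAux K).flip x) ⊓ LinearMap.ker ((BfAux K).flip y) with hUsub
  have memU : ∀ v : Vec S, v ∈ Usub ↔ Bform K v x = 0 ∧ Bform K v y = 0 := by
    intro v
    rw [hUsub, Submodule.mem_inf, LinearMap.mem_ker, LinearMap.mem_ker,
      LinearMap.flip_apply, LinearMap.flip_apply, BfAux_apply, BfAux_apply]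
  -- bilinearity: subtraction
  have hsubl : ∀ p q t : Vec S, Bform K (p - q) t = Bform K p t - Bform K q t := by
    intro p q t
    simp only [← BfAux_apply, map_sub, LinearMap.sub_apply]
  -- continuity of the quadratic form
  have hcont : Continuous (fun v : Vec S => Bform K v v) := by
    apply continuous_finset_sum
    intro s _
    apply continuous_finset_sum
    intro t _
    exact ((continuous_apply s).mul continuous_const).mul (continuous_apply t)
  haveI : ProperSpace (Vec S) := FiniteDimensional.proper_real (Vec S)
  -- upper bound for the form in terms of the sup norm
  obtain ⟨C, hCpos, hCbound⟩ : ∃ C > 0, ∀ v : Vec S, Bform K v v ≤ C * (‖v‖ * ‖v‖) := by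
    refine ⟨(∑ s : S, ∑ t : S, |K s t|) + 1, by positivity, ?_⟩
    intro v
    have h1 : Bform K v v ≤ ∑ s : S, ∑ t : S, |v s * K s t * v t| := by
      refine le_trans (le_abs_self _) (le_trans (Finset.abs_sum_le_sum_abs _ _) ?_)
      exact Finset.sum_le_sum fun s _ => Finset.abs_sum_le_sum_abs _ _
    have h2 : ∑ s : S, ∑ t : S, |v s * K s t * v t|
        ≤ ∑ s : S, ∑ t : S, |K s t| * (‖v‖ * ‖v‖) := by
      refine Finset.sum_le_sum fun s _ => Finset.sum_le_sum fun t _ => ?_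
      rw [abs_mul, abs_mul]
      have hvs : |v s| ≤ ‖v‖ := by simpa using norm_le_pi_norm v s
      have hvt : |v t| ≤ ‖v‖ := by simpa using norm_le_pi_norm v t
      have habs : (0:ℝ) ≤ |K s t| := abs_nonneg _
      calc |v s| * |K s t| * |v t| ≤ ‖v‖ * |K s t| * ‖v‖ := by
            apply mul_le_mul (mul_le_mul_of_nonneg_right hvs habs) hvt (abs_nonneg _)
              (mul_nonneg (norm_nonneg _) habs)
        _ = |K s t| * (‖v‖ * ‖v‖) := by ring
    have h3 : ∑ s : S, ∑ t : S, |K s t| * (‖v‖ * ‖v‖)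
        = (∑ s : S, ∑ t : S, |K s t|) * (‖v‖ * ‖v‖) := by
      rw [Finset.sum_mul]
      exact Finset.sum_congr rfl fun s _ => (Finset.sum_mul _ _ _).symm
    have h4 : (0:ℝ) ≤ ∑ s : S, ∑ t : S, |K s t| :=
      Finset.sum_nonneg fun s _ => Finset.sum_nonneg fun t _ => abs_nonneg _
    nlinarith [norm_nonneg v]
  -- lower bound for the form on Usub
  obtain ⟨c, hcpos, hcbound⟩ : ∃ c > 0, ∀ v : Vec S, v ∈ Usub →
      c * (‖v‖ * ‖v‖) ≤ Bform K v v := by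
    set sph : Set (Vec S) := (Usub : Set (Vec S)) ∩ Metric.sphere 0 1 with hsphdef
    have hUclosed : IsClosed (Usub : Set (Vec S)) := Usub.closed_of_finiteDimensional
    have hclosed : IsClosed sph := hUclosed.inter Metric.isClosed_sphere
    have hcompact : IsCompact sph :=
      Metric.isCompact_of_isClosed_isBounded hclosed
        (Metric.isBounded_sphere.subset Set.inter_subset_right)
    have hzU : z ∈ Usub := (memU z).mpr ⟨hzx, hzy⟩
    have hnz : ‖z‖ ≠ 0 := norm_ne_zero_iff.mpr hz
    have hsphne : sph.Nonempty := by
      refine ⟨‖z‖⁻¹ • z, Usub.smul_mem _ hzU, ?_⟩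
      rw [Metric.mem_sphere, dist_zero_right, norm_smul, norm_inv, norm_norm]
      field_simp
    obtain ⟨vm, hvm, hvmmin⟩ := hcompact.exists_isMinOn hsphne hcont.continuousOn
    have hvmnorm : ‖vm‖ = 1 := by
      have := hvm.2
      rwa [Metric.mem_sphere, dist_zero_right] at this
    have hvmne : vm ≠ 0 := by
      intro h
      rw [h, norm_zero] at hvmnorm
      exact one_ne_zero hvmnorm.symm
    have hvmU := (memU vm).mp hvm.1
    refine ⟨Bform K vm vm, hUpos vm hvmU.1 hvmU.2 hvmne, ?_⟩
    intro v hvU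
    rcases eq_or_ne v 0 with h | h
    · rw [h, norm_zero, hB0]
      simp
    · have hnv : (0:ℝ) < ‖v‖ := norm_pos_iff.mpr h
      have huin : ‖v‖⁻¹ • v ∈ sph := by
        refine ⟨Usub.smul_mem _ hvU, ?_⟩
        rw [Metric.mem_sphere, dist_zero_right, norm_smul, norm_inv, norm_norm]
        field_simp
      have hmin : Bform K vm vm ≤ Bform K (‖v‖⁻¹ • v) (‖v‖⁻¹ • v) :=
        isMinOn_iff.mp hvmmin _ huin
      have hexpand : Bform K (‖v‖⁻¹ • v) (‖v‖⁻¹ • v)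
          = ‖v‖⁻¹ * (‖v‖⁻¹ * Bform K v v) := by
        rw [hsmull, hsmulr]
      rw [hexpand] at hmin
      have heq2 : ‖v‖⁻¹ * (‖v‖⁻¹ * Bform K v v) * (‖v‖ * ‖v‖) = Bform K v v := by
        field_simp
      nlinarith [hmin, mul_pos hnv hnv]
  -- the orbit sequence
  set sv : ℕ → Vec S := fun n => G.ρ (w ^ n) z with hsv
  have hsvU : ∀ n : ℕ, sv n ∈ Usub := fun n => (memU _).mpr (hUinv n z hzx hzy)
  have hsv0 : sv 0 = z := by
    show G.ρ (w ^ 0) z = z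
    rw [pow_zero, map_one]
    rfl
  have hsvB : ∀ n : ℕ, Bform K (sv n) (sv n) = Bform K z z := by
    intro n
    show Bform K (G.ρ (w ^ n) z) (G.ρ (w ^ n) z) = Bform K z z
    rw [hK]
    exact G.ρ_preserves _ _ _
  have horbbound : ∀ n : ℕ, sv n ∈ Metric.closedBall (0 : Vec S)
      (Real.sqrt (Bform K z z / c)) := by
    intro n
    rw [Metric.mem_closedBall, dist_zero_right]
    have h1 := hcbound (sv n) (hsvU n)
    rw [hsvB n] at h1
    have h2 : ‖sv n‖ * ‖sv n‖ ≤ Bform K z z / c := by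
      rw [le_div_iff₀ hcpos]
      linarith
    calc ‖sv n‖ = Real.sqrt (‖sv n‖ * ‖sv n‖) := (Real.sqrt_mul_self (norm_nonneg _)).symm
      _ ≤ Real.sqrt (Bform K z z / c) := Real.sqrt_le_sqrt h2
  obtain ⟨u0, -, φ, hφmono, hφtend⟩ :=
    (isCompact_closedBall (0 : Vec S) _).tendsto_subseq horbbound
  have hcauchy : CauchySeq (sv ∘ φ) := hφtend.cauchySeq
  -- the form is invariant along the orbit
  have hdistB : ∀ a p : ℕ, Bform K (sv (a + p) - sv a) (sv (a + p) - sv a)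
      = Bform K (sv p - sv 0) (sv p - sv 0) := by
    intro a p
    have hv1 : sv (a + p) - sv a = G.ρ (w ^ a) (sv p - sv 0) := by
      show G.ρ (w ^ (a + p)) z - G.ρ (w ^ a) z = G.ρ (w ^ a) (sv p - sv 0)
      rw [map_sub, hsv0, pow_add, hmulapp]
    rw [hv1, hK]
    exact G.ρ_preserves _ _ _
  -- recurrence
  have hA : ∀ ε : ℝ, 0 < ε → ∀ N : ℕ, ∃ p, N < p ∧ dist (sv p) (sv 0) < ε := by
    intro ε hε N
    have hccC : (0:ℝ) ≤ c / C := div_nonneg hcpos.le hCpos.le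
    have hs : Real.sqrt (c / C) * Real.sqrt (c / C) = c / C := Real.mul_self_sqrt hccC
    have hε'pos : 0 < Real.sqrt (c / C) * ε :=
      mul_pos (Real.sqrt_pos.mpr (div_pos hcpos hCpos)) hε
    obtain ⟨M, hM⟩ := Metric.cauchySeq_iff'.mp hcauchy _ hε'pos
    set j := max M (N + φ M + 1) with hj
    have h1 := hM j (le_max_left _ _)
    have hφj : N + φ M + 1 ≤ φ j := le_trans (le_max_right _ _) hφmono.le_apply
    refine ⟨φ j - φ M, by omega, ?_⟩
    set p := φ j - φ M with hpdef
    have heqp : φ M + p = φ j := by omega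
    have hmid := hdistB (φ M) p
    rw [heqp] at hmid
    have hlow := hcbound (sv p - sv 0) (Usub.sub_mem (hsvU p) (hsvU 0))
    have hup := hCbound (sv (φ j) - sv (φ M))
    have hkey : c * (‖sv p - sv 0‖ * ‖sv p - sv 0‖)
        ≤ C * (‖sv (φ j) - sv (φ M)‖ * ‖sv (φ j) - sv (φ M)‖) := by
      calc c * (‖sv p - sv 0‖ * ‖sv p - sv 0‖)
          ≤ Bform K (sv p - sv 0) (sv p - sv 0) := hlow
        _ = Bform K (sv (φ j) - sv (φ M)) (sv (φ j) - sv (φ M)) := hmid.symm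
        _ ≤ C * (‖sv (φ j) - sv (φ M)‖ * ‖sv (φ j) - sv (φ M)‖) := hup
    have h1' : ‖sv (φ j) - sv (φ M)‖ < Real.sqrt (c / C) * ε := by
      rw [← dist_eq_norm]
      exact h1
    rw [dist_eq_norm]
    by_contra hcon
    push_neg at hcon
    have hCc : C * (c / C) = c := by field_simp
    set A := ‖sv p - sv 0‖ with hA2
    set D := ‖sv (φ j) - sv (φ M)‖ with hD2'
    set sq := Real.sqrt (c / C) with hsq
    have hDnn : (0:ℝ) ≤ D := norm_nonneg _
    have hD2 : D * D < (sq * ε) * (sq * ε) := by nlinarith [h1', hDnn]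
    have h2 : C * (D * D) < C * ((sq * ε) * (sq * ε)) :=
      mul_lt_mul_of_pos_left hD2 hCpos
    have h3 : C * ((sq * ε) * (sq * ε)) = c * (ε * ε) := by
      calc C * ((sq * ε) * (sq * ε)) = C * (sq * sq) * (ε * ε) := by ring
        _ = C * (c / C) * (ε * ε) := by rw [hs]
        _ = c * (ε * ε) := by rw [hCc]
    have h4 : c * (ε * ε) ≤ c * (A * A) := by
      have hAe : ε * ε ≤ A * A := mul_le_mul hcon hcon hε.le (le_trans hε.le hcon)
      exact mul_le_mul_of_nonneg_left hAe hcpos.le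
    linarith [hkey, h2, h3, h4]
  -- construct the strictly monotone sequence of return times
  have hA' : ∀ i N : ℕ, ∃ p, N < p ∧ dist (sv p) (sv 0) < 1 / ((i : ℝ) + 1) :=
    fun i N => hA (1 / ((i : ℝ) + 1)) (by positivity) N
  choose g hg1 hg2 using hA'
  set m : ℕ → ℕ := fun i => Nat.rec (g 0 0) (fun j prev => g (j + 1) prev) i with hm
  have hmsucc : ∀ i : ℕ, m (i + 1) = g (i + 1) (m i) := fun i => rfl
  have hmono : StrictMono m :=
    strictMono_nat_of_lt_succ (fun i => by rw [hmsucc]; exact hg1 (i + 1) (m i))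
  have hmbound : ∀ i : ℕ, dist (sv (m i)) (sv 0) < 1 / ((i : ℝ) + 1) := by
    intro i
    cases i with
    | zero => exact hg2 0 0
    | succ j => rw [hmsucc]; exact hg2 (j + 1) (m j)
  have htendval : Tendsto (fun i => G.ρ (w ^ m i) z) atTop (nhds z) := by
    have h1 : Tendsto (fun i => sv (m i)) atTop (nhds (sv 0)) := by
      apply tendsto_iff_dist_tendsto_zero.mpr
      apply squeeze_zero (fun i => dist_nonneg) (fun i => (hmbound i).le)
      exact tendsto_one_div_add_atTop_nhds_zero_nat
    rw [hsv0] at h1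
    exact h1
  -- the projective sequence
  have hvdecomp : ∀ n : ℕ, G.ρ (w ^ n) (z + y) = G.ρ (w ^ n) z + (l⁻¹ ^ n) • y := by
    intro n
    rw [map_add, hpowy n]
  have hvBx : ∀ n : ℕ, Bform K (G.ρ (w ^ n) (z + y)) x = l⁻¹ ^ n * Bform K y x := by
    intro n
    rw [hvdecomp n, haddl, hsmull, (hUinv n z hzx hzy).1, zero_add]
  have hvne : ∀ n : ℕ, G.ρ (w ^ n) (z + y) ≠ 0 := by
    intro n h
    have h1 := hvBx n
    rw [h, hB0] at h1
    exact (mul_ne_zero (by positivity : (l⁻¹ : ℝ) ^ n ≠ 0) hyxne) h1.symm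
  have hzyne : z + y ≠ 0 := by
    intro h
    have := hvne 0
    rw [pow_zero, map_one] at this
    exact this h
  have hvt : Tendsto (fun i => G.ρ (w ^ m i) (z + y)) atTop (nhds z) := by
    have h2 : Tendsto (fun i => ((l⁻¹ : ℝ) ^ m i)) atTop (nhds 0) :=
      (tendsto_pow_atTop_nhds_zero_of_lt_one hlinv.le hlinv1).comp hmono.tendsto_atTop
    have h3 := h2.smul_const y
    rw [zero_smul] at h3
    have h4 := htendval.add h3
    rw [add_zero] at h4
    simpa only [hvdecomp] using h4
  set p₀ : ℙ ℝ (Vec S) := Projectivization.mk ℝ (z + y) hzyne with hp0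
  have hpact : ∀ n : ℕ, G.pact (w ^ n) p₀ =
      Projectivization.mk ℝ (G.ρ (w ^ n) (z + y)) (hvne n) := by
    intro n
    rw [hp0]
    exact Projectivization.map_mk _ _ _ _
  refine ⟨p₀, fun i => w ^ m i, ?_, ?_⟩
  · -- injectivity
    intro i j hij
    simp only [hpact] at hij
    rw [Projectivization.mk_eq_mk_iff'] at hij
    obtain ⟨a, ha⟩ := hij
    -- compare B-values with x
    have e1 : Bform K (a • G.ρ (w ^ m j) (z + y)) x = a * (l⁻¹ ^ m j * Bform K y x) := by
      rw [hsmull, hvBx]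
    rw [ha, hvBx] at e1
    have e5 : l⁻¹ ^ m i = a * l⁻¹ ^ m j := by
      have e1' : (l⁻¹ ^ m i) * Bform K y x = (a * l⁻¹ ^ m j) * Bform K y x := by
        rw [e1]; ring
      exact mul_right_cancel₀ hyxne e1'
    -- self-pairing
    have hself : Bform K (z + y) (z + y) = Bform K z z := by
      have hyz : Bform K y z = 0 := (hBsymm y z).trans hzy
      rw [haddl]
      have h1 : Bform K z (z + y) = Bform K z z := by
        have := haddl z y z
        calc Bform K z (z + y) = Bform K (z + y) z := hBsymm _ _
          _ = Bform K z z + Bform K y z := haddl _ _ _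
          _ = Bform K z z := by rw [hyz, add_zero]
      have h2 : Bform K y (z + y) = 0 := by
        calc Bform K y (z + y) = Bform K (z + y) y := hBsymm _ _
          _ = Bform K z y + Bform K y y := haddl _ _ _
          _ = 0 := by rw [hzy, hyy, add_zero]
      rw [h1, h2, add_zero]
    have haa : a * a = 1 := by
      have h5 : Bform K (z + y) (z + y) =
          a * a * Bform K (z + y) (z + y) := by
        conv_lhs => rw [← G.ρ_preserves (w ^ m i) (z + y) (z + y), ← ha]
        rw [hsmull, hsmulr, G.ρ_preserves]
        ring
      have hne : Bform K (z + y) (z + y) ≠ 0 := by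
        rw [hself]; exact hBzz.ne'
      have h6 : (a * a - 1) * Bform K (z + y) (z + y) = 0 := by linear_combination -h5
      rcases mul_eq_zero.mp h6 with h | h
      · linarith
      · exact absurd h hne
    have hapos : 0 < a := by
      have h7 : 0 < a * l⁻¹ ^ m j := by
        rw [← e5]; positivity
      rcases mul_pos_iff.mp h7 with ⟨h, _⟩ | ⟨_, h⟩
      · exact h
      · exact absurd h (by positivity : (0:ℝ) < l⁻¹ ^ m j).asymm
    have ha1 : a = 1 := by
      rcases mul_self_eq_one_iff.mp haa with h | h
      · exact h
      · linarith
    rw [ha1, one_mul] at e5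
    have hmeq : m i = m j := by
      have hsa : StrictAnti (fun n : ℕ => (l⁻¹ : ℝ) ^ n) :=
        pow_right_strictAnti₀ hlinv hlinv1
      exact hsa.injective e5
    exact hmono.injective hmeq
  · -- convergence
    have hfun : (fun i => G.pact (w ^ m i) p₀) =
        fun i => Projectivization.mk ℝ (G.ρ (w ^ m i) (z + y)) (hvne (m i)) :=
      funext fun i => hpact (m i)
    rw [hfun]
    have hsub : Tendsto
        (fun i => (⟨G.ρ (w ^ m i) (z + y), hvne (m i)⟩ : {v : Vec S // v ≠ 0}))
        atTop (nhds ⟨z, hz⟩) := by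
      rw [tendsto_subtype_rng]
      exact hvt
    have hq : Continuous
        (fun v : {v : Vec S // v ≠ 0} => (Quotient.mk'' v : ℙ ℝ (Vec S))) :=
      continuous_quotient_mk'
    exact (hq.tendsto _).comp hsub
end
end
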